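/- For every SID Δ and nullary predicate A, every canonical Δ-model S ∈ C[[A]]_Δ satisfies tw(S) ≤ maxvar(Δ) − 1. -/

import Mathlib

/-!
Common definitions for the formalization of
"The Treewidth Boundedness Problem for an Inductive Separation Logic of Relations".
-/

namespace SLRTW

/-! ### Relational structures over a fixed universe `V` -/

/-- A structure over the relational signature given by `Rel`, `ar` with universe `V`:
each relation symbol is interpreted as a finite set of tuples, and only finitely many
relation symbols have a nonempty interpretation. -/
structure Str (Rel : Type) (ar : Rel → ℕ) (V : Type) where
  interp : ∀ r : Rel, Set (Fin (ar r) → V)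
  finite_interp : ∀ r, (interp r).Finite
  finite_active : {r : Rel | interp r ≠ ∅}.Finite

/-- Formulas of the separation logic of relations, over relation symbols `Rel` (with
arities `ar`) and predicate symbols `Pr` (with arities `pa`).  Variables are natural
numbers; by convention, the parameters of a predicate of arity `n` are `0, …, n-1`. -/
inductive SLR (Rel : Type) (ar : Rel → ℕ) (Pr : Type) (pa : Pr → ℕ) : Type where
  | emp : SLR Rel ar Pr pa
  | eq (x y : ℕ) : SLR Rel ar Pr pa
  | ne (x y : ℕ) : SLR Rel ar Pr pa
  | rel (r : Rel) (a : Fin (ar r) → ℕ) : SLR Rel ar Pr pa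
  | pred (A : Pr) (a : Fin (pa A) → ℕ) : SLR Rel ar Pr pa
  | star (φ ψ : SLR Rel ar Pr pa) : SLR Rel ar Pr pa
  | ex (x : ℕ) (φ : SLR Rel ar Pr pa) : SLR Rel ar Pr pa

/-- An RGB color scheme: a partition of the set of colors `𝒫(Rel)` into red, green
and blue colors, such that any two blue colors intersect, every green color intersects
every blue color, and every red color is disjoint from some blue color. -/
structure RGB (Rel : Type) where
  red : Set (Set Rel)
  green : Set (Set Rel)
  blue : Set (Set Rel)
  cover : ∀ C : Set Rel, C ∈ red ∨ C ∈ green ∨ C ∈ blue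
  red_green : red ∩ green = ∅
  red_blue : red ∩ blue = ∅
  green_blue : green ∩ blue = ∅
  blue_blue_meet : ∀ C1 ∈ blue, ∀ C2 ∈ blue, (C1 ∩ C2).Nonempty
  green_blue_meet : ∀ C1 ∈ green, ∀ C2 ∈ blue, (C1 ∩ C2).Nonempty
  red_sep : ∀ C1 ∈ red, ∃ C2 ∈ blue, C1 ∩ C2 = ∅

section Defs1

variable {Rel : Type} {ar : Rel → ℕ} {V : Type} {Pr : Type} {pa : Pr → ℕ}

/-- The support of a structure: the elements occurring in some tuple. -/
def Str.supp (S : Str Rel ar V) : Set V :=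
  { u | ∃ (r : Rel) (t : Fin (ar r) → V), t ∈ S.interp r ∧ ∃ i, t i = u }

/-- Two structures are locally disjoint iff their interpretations are pointwise disjoint. -/
def LocDisj (S1 S2 : Str Rel ar V) : Prop :=
  ∀ r, S1.interp r ∩ S2.interp r = ∅

/-- Composition of structures (pointwise union of the interpretations). -/
def Str.comp (S1 S2 : Str Rel ar V) : Str Rel ar V where
  interp r := S1.interp r ∪ S2.interp r
  finite_interp r := (S1.finite_interp r).union (S2.finite_interp r)
  finite_active := by
    refine (S1.finite_active.union S2.finite_active).subset ?_
    intro r hr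
    simp only [Set.mem_setOf_eq, Set.mem_union, ne_eq] at hr ⊢
    rw [Set.union_empty_iff] at hr
    tauto

/-- Composition of a finite family of structures. -/
def bigComp {n : ℕ} (Ss : Fin n → Str Rel ar V) : Str Rel ar V where
  interp r := ⋃ i, (Ss i).interp r
  finite_interp r := Set.finite_iUnion fun i => (Ss i).finite_interp r
  finite_active := by
    refine (Set.finite_iUnion fun i => (Ss i).finite_active).subset ?_
    intro r hr
    simp only [Set.mem_setOf_eq, ne_eq, Set.iUnion_eq_empty, Set.mem_iUnion] at hr ⊢
    push_neg at hr
    obtain ⟨i, hi⟩ := hr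
    exact ⟨i, Set.nonempty_iff_ne_empty.mp hi⟩

/-- A tree decomposition of a structure: a finite tree whose nodes carry finite bags of
elements, covering every tuple, and such that the set of nodes containing any given
support element is nonempty and connected. -/
structure TreeDecomp (S : Str Rel ar V) where
  ι : Type
  instFin : Fintype ι
  G : SimpleGraph ι
  isTree : G.IsTree
  bag : ι → Finset V
  bag_cover : ∀ (r : Rel), ∀ t ∈ S.interp r, ∃ n : ι, ∀ i, t i ∈ bag n
  bag_conn : ∀ u ∈ S.supp, (SimpleGraph.induce {n : ι | u ∈ bag n} G).Connected

attribute [instance] TreeDecomp.instFin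

/-- The width of a tree decomposition: maximal bag size minus one. -/
def TreeDecomp.width {S : Str Rel ar V} (T : TreeDecomp S) : ℕ :=
  (Finset.univ.sup fun n : T.ι => (T.bag n).card) - 1

/-- The treewidth of a structure: the minimal width of a tree decomposition. -/
noncomputable def tw (S : Str Rel ar V) : ℕ :=
  sInf { w | ∃ T : TreeDecomp S, T.width = w }

/-- A set of structures is treewidth-bounded iff the treewidths of its members are
bounded. -/
def TWB (𝒮 : Set (Str Rel ar V)) : Prop :=
  ∃ k : ℕ, ∀ S ∈ 𝒮, tw S ≤ k

/-- The supremum of the treewidths of a set of structures (in `ℕ∞`). -/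
noncomputable def twSet (𝒮 : Set (Str Rel ar V)) : ℕ∞ :=
  ⨆ S ∈ 𝒮, (tw S : ℕ∞)

namespace SLR

/-- Free variables of a formula. -/
def fv : SLR Rel ar Pr pa → Set ℕ
  | .emp => ∅
  | .eq x y => {x, y}
  | .ne x y => {x, y}
  | .rel _ a => Set.range a
  | .pred _ a => Set.range a
  | .star φ ψ => φ.fv ∪ ψ.fv
  | .ex x φ => φ.fv \ {x}

/-- All variables (free or bound) occurring in a formula. -/
def vars : SLR Rel ar Pr pa → Set ℕ
  | .emp => ∅
  | .eq x y => {x, y}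
  | .ne x y => {x, y}
  | .rel _ a => Set.range a
  | .pred _ a => Set.range a
  | .star φ ψ => φ.vars ∪ ψ.vars
  | .ex x φ => insert x φ.vars

/-- Predicate-free formulas. -/
def PredFree : SLR Rel ar Pr pa → Prop
  | .pred _ _ => False
  | .star φ ψ => φ.PredFree ∧ ψ.PredFree
  | .ex _ φ => φ.PredFree
  | _ => True

/-- Quantifier- and predicate-free (qpf) formulas. -/
def QPF : SLR Rel ar Pr pa → Prop
  | .pred _ _ => False
  | .ex _ _ => False
  | .star φ ψ => φ.QPF ∧ ψ.QPF
  | _ => True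

/-- Formulas containing only relation atoms. -/
def RelOnly : SLR Rel ar Pr pa → Prop
  | .rel _ _ => True
  | .star φ ψ => φ.RelOnly ∧ ψ.RelOnly
  | _ => False

/-- Formulas containing only equality atoms (and `emp`). -/
def EqOnly : SLR Rel ar Pr pa → Prop
  | .emp => True
  | .eq _ _ => True
  | .star φ ψ => φ.EqOnly ∧ ψ.EqOnly
  | _ => False

/-- Equality-free formulas: no equality atom and no predicate atom in which the same
variable occurs twice. -/
def EqFreeF : SLR Rel ar Pr pa → Prop
  | .eq _ _ => False
  | .pred _ a => Function.Injective a
  | .star φ ψ => φ.EqFreeF ∧ ψ.EqFreeF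
  | .ex _ φ => φ.EqFreeF
  | _ => True

/-- The number of predicate atoms occurring in a formula. -/
def npred : SLR Rel ar Pr pa → ℕ
  | .pred _ _ => 1
  | .star φ ψ => φ.npred + ψ.npred
  | .ex _ φ => φ.npred
  | _ => 0

/-- The number of relation atoms occurring in a formula. -/
def nrel : SLR Rel ar Pr pa → ℕ
  | .rel _ _ => 1
  | .star φ ψ => φ.nrel + ψ.nrel
  | .ex _ φ => φ.nrel
  | _ => 0

/-- The set of relation symbols occurring in a formula. -/
def rels : SLR Rel ar Pr pa → Set Rel
  | .rel r _ => {r}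
  | .star φ ψ => φ.rels ∪ ψ.rels
  | .ex _ φ => φ.rels
  | _ => ∅

/-- The set of predicate symbols occurring in a formula. -/
def preds : SLR Rel ar Pr pa → Set Pr
  | .pred A _ => {A}
  | .star φ ψ => φ.preds ∪ ψ.preds
  | .ex _ φ => φ.preds
  | _ => ∅

/-- The quantifier-free matrix of a formula (erasing all existential quantifiers). -/
def matrix : SLR Rel ar Pr pa → SLR Rel ar Pr pa
  | .ex _ φ => φ.matrix
  | .star φ ψ => .star φ.matrix ψ.matrix
  | φ => φ

/-- The list of bound variables of a formula. -/
def binders : SLR Rel ar Pr pa → List ℕ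
  | .ex x φ => x :: φ.binders
  | .star φ ψ => φ.binders ++ ψ.binders
  | _ => []

/-- A formula is well-named iff its bound variables are pairwise distinct and distinct
from its free variables.  For a well-named formula, the matrix faithfully represents
the prenex form. -/
def WellNamed (χ : SLR Rel ar Pr pa) : Prop :=
  χ.binders.Nodup ∧ ∀ x ∈ χ.binders, x ∉ χ.fv

/-- The disequality `x ≠ y` occurs in the formula (as an unordered pair). -/
def neOccurs : SLR Rel ar Pr pa → ℕ → ℕ → Prop
  | .ne a b, x, y => (a = x ∧ b = y) ∨ (a = y ∧ b = x)
  | .star φ ψ, x, y => φ.neOccurs x y ∨ ψ.neOccurs x y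
  | .ex _ φ, x, y => φ.neOccurs x y
  | _, _, _ => False

/-- The equality `x = y` occurs in the formula (as an unordered pair). -/
def eqOccurs : SLR Rel ar Pr pa → ℕ → ℕ → Prop
  | .eq a b, x, y => (a = x ∧ b = y) ∨ (a = y ∧ b = x)
  | .star φ ψ, x, y => φ.eqOccurs x y ∨ ψ.eqOccurs x y
  | .ex _ φ, x, y => φ.eqOccurs x y
  | _, _, _ => False

end SLR

/-- The nullary predicate atom `A()` (the arguments are irrelevant when `pa A = 0`). -/
def natom (A : Pr) : SLR Rel ar Pr pa := .pred A fun _ => 0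

/-- Iterated separating conjunction: `starAll φ [χ1, …, χn] = χ1 * (χ2 * … * (χn * φ))`. -/
def starAll (φ : SLR Rel ar Pr pa) : List (SLR Rel ar Pr pa) → SLR Rel ar Pr pa
  | [] => φ
  | χ :: l => .star χ (starAll φ l)

end Defs1

/-- A set of inductive definitions (SID): a finite set of rules `A(0,…,pa A - 1) ← φ`
where the free variables of `φ` are among the parameters `0, …, pa A - 1`. -/
structure SID (Rel : Type) (ar : Rel → ℕ) (Pr : Type) (pa : Pr → ℕ) where
  rules : Pr → Set (SLR Rel ar Pr pa)
  finite_rules : {p : Pr × SLR Rel ar Pr pa | p.2 ∈ rules p.1}.Finite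
  wf : ∀ A, ∀ φ ∈ rules A, SLR.fv φ ⊆ {x | x < pa A}

section Defs2

variable {Rel : Type} {ar : Rel → ℕ} {V : Type} {Pr : Type} {pa : Pr → ℕ}

/-- The empty structure predicate. -/
def EmpS (S : Str Rel ar V) : Prop := ∀ r, S.interp r = ∅

/-- The satisfaction relation of SLR, parameterized by a store and an SID.
A predicate atom `A(y₁,…,yₙ)` is satisfied iff the body of some rule for `A` is
satisfied under the store mapping the parameter `i` to the value of `yᵢ₊₁`. -/
inductive Sat (Δ : SID Rel ar Pr pa) :
    Str Rel ar V → (ℕ → V) → SLR Rel ar Pr pa → Prop where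
  | emp {S : Str Rel ar V} {s : ℕ → V} : EmpS S → Sat Δ S s .emp
  | eq {S : Str Rel ar V} {s : ℕ → V} {x y : ℕ} :
      EmpS S → s x = s y → Sat Δ S s (.eq x y)
  | ne {S : Str Rel ar V} {s : ℕ → V} {x y : ℕ} :
      EmpS S → s x ≠ s y → Sat Δ S s (.ne x y)
  | rel {S : Str Rel ar V} {s : ℕ → V} {r : Rel} {a : Fin (ar r) → ℕ} :
      S.interp r = {fun i => s (a i)} → (∀ r', r' ≠ r → S.interp r' = ∅) →
      Sat Δ S s (.rel r a)
  | pred {S : Str Rel ar V} {s : ℕ → V} {A : Pr} {a : Fin (pa A) → ℕ}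
      {body : SLR Rel ar Pr pa} :
      body ∈ Δ.rules A →
      Sat Δ S (fun n => if h : n < pa A then s (a ⟨n, h⟩) else s n) body →
      Sat Δ S s (.pred A a)
  | star {S1 S2 : Str Rel ar V} {s : ℕ → V} {φ ψ : SLR Rel ar Pr pa} :
      LocDisj S1 S2 → Sat Δ S1 s φ → Sat Δ S2 s ψ →
      Sat Δ (S1.comp S2) s (.star φ ψ)
  | ex {S : Str Rel ar V} {s : ℕ → V} {x : ℕ} {φ : SLR Rel ar Pr pa} (u : V) :
      Sat Δ S (Function.update s x u) φ → Sat Δ S s (.ex x φ)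

/-- The set of `Δ`-models of a sentence (over universe `V`). -/
def SMod (Δ : SID Rel ar Pr pa) (φ : SLR Rel ar Pr pa) : Set (Str Rel ar V) :=
  { S | ∃ s : ℕ → V, Sat Δ S s φ }

/-- `IsSubst f φ φ'` holds iff `φ'` is obtained from `φ` by the capture-avoiding
substitution of `f x` for each free variable `x`, the bound variables being renamed
to avoid clashes. -/
inductive IsSubst : (ℕ → ℕ) → SLR Rel ar Pr pa → SLR Rel ar Pr pa → Prop where
  | emp {f : ℕ → ℕ} : IsSubst f .emp .emp
  | eq {f : ℕ → ℕ} {x y : ℕ} : IsSubst f (.eq x y) (.eq (f x) (f y))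
  | ne {f : ℕ → ℕ} {x y : ℕ} : IsSubst f (.ne x y) (.ne (f x) (f y))
  | rel {f : ℕ → ℕ} {r : Rel} {a : Fin (ar r) → ℕ} :
      IsSubst f (.rel r a) (.rel r (f ∘ a))
  | pred {f : ℕ → ℕ} {A : Pr} {a : Fin (pa A) → ℕ} :
      IsSubst f (.pred A a) (.pred A (f ∘ a))
  | star {f : ℕ → ℕ} {φ ψ φ' ψ' : SLR Rel ar Pr pa} :
      IsSubst f φ φ' → IsSubst f ψ ψ' → IsSubst f (.star φ ψ) (.star φ' ψ')
  | ex {f : ℕ → ℕ} {x z : ℕ} {φ φ' : SLR Rel ar Pr pa} :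
      (∀ y ∈ SLR.fv φ, y ≠ x → f y ≠ z) →
      IsSubst (Function.update f x z) φ φ' →
      IsSubst f (.ex x φ) (.ex z φ')

/-- One unfolding step: replace one predicate atom `A(y₁,…,yₙ)` by the body of a rule
for `A`, with the parameters substituted by `y₁,…,yₙ` (bound variables renamed to
avoid clashes). -/
inductive Step (Δ : SID Rel ar Pr pa) : SLR Rel ar Pr pa → SLR Rel ar Pr pa → Prop where
  | unfold {A : Pr} {a : Fin (pa A) → ℕ} {body ψ : SLR Rel ar Pr pa} :
      body ∈ Δ.rules A →
      IsSubst (fun n => if h : n < pa A then a ⟨n, h⟩ else n) body ψ →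
      Step Δ (.pred A a) ψ
  | starL {φ φ' ψ : SLR Rel ar Pr pa} : Step Δ φ φ' → Step Δ (.star φ ψ) (.star φ' ψ)
  | starR {φ ψ ψ' : SLR Rel ar Pr pa} : Step Δ ψ ψ' → Step Δ (.star φ ψ) (.star φ ψ')
  | exC {x : ℕ} {φ φ' : SLR Rel ar Pr pa} : Step Δ φ φ' → Step Δ (.ex x φ) (.ex x φ')

/-- `Δ`-unfolding: the reflexive-transitive closure of unfolding steps. -/
def Unfolds (Δ : SID Rel ar Pr pa) : SLR Rel ar Pr pa → SLR Rel ar Pr pa → Prop :=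
  Relation.ReflTransGen (Step Δ)

/-- `x = y` is a logical consequence of `ψ`. -/
def EqConseq (Δ : SID Rel ar Pr pa) (ψ : SLR Rel ar Pr pa) (x y : ℕ) : Prop :=
  ∀ (S : Str Rel ar V) (s : ℕ → V), Sat Δ S s ψ → s x = s y

/-- A store is canonical for `ψ` iff it identifies only variables that are equated as a
logical consequence of `ψ`. -/
def CanonicalStore (Δ : SID Rel ar Pr pa) (s : ℕ → V) (ψ : SLR Rel ar Pr pa) : Prop :=
  ∀ x ∈ ψ.fv, ∀ y ∈ ψ.fv, s x = s y → EqConseq (V := V) Δ ψ x y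

/-- `(S, d)` is a rich canonical `Δ`-model of `φ`: for some complete `Δ`-unfolding of
`φ` into a well-named predicate-free formula `χ` (i.e. of the form `∃x⃗.ψ` with `ψ` qpf,
up to hoisting of quantifiers) and some store canonical for the matrix `ψ`, the
structure `S` satisfies `ψ` and `d` records the disequalities of `ψ` under the store. -/
def RichCanonical (Δ : SID Rel ar Pr pa) (φ : SLR Rel ar Pr pa)
    (S : Str Rel ar V) (d : V → V → Prop) : Prop :=
  ∃ χ : SLR Rel ar Pr pa, Unfolds Δ φ χ ∧ χ.PredFree ∧ χ.WellNamed ∧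
    ∃ s : ℕ → V, CanonicalStore Δ s χ.matrix ∧ Sat Δ S s χ.matrix ∧
      ∀ u v : V, d u v ↔ ∃ x y : ℕ, s x = u ∧ s y = v ∧ χ.matrix.neOccurs x y

/-- The set of canonical `Δ`-models of `φ`. -/
def Canonical (Δ : SID Rel ar Pr pa) (φ : SLR Rel ar Pr pa) : Set (Str Rel ar V) :=
  { S | ∃ d, RichCanonical Δ φ S d }

/-- `S1` is a substructure of `S2`: its interpretation consists exactly of the tuples of
`S2` all of whose elements belong to the support of `S1`. -/
def Substr (S1 S2 : Str Rel ar V) : Prop :=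
  ∀ r, S1.interp r = { t ∈ S2.interp r | ∀ i, t i ∈ S1.supp }

/-- Two elements touch iff they occur in a common tuple. -/
def Touching (S : Str Rel ar V) (u v : V) : Prop :=
  ∃ (r : Rel) (t : Fin (ar r) → V), t ∈ S.interp r ∧ (∃ i, t i = u) ∧ ∃ j, t j = v

/-- A structure is connected iff any two support elements are joined by a path of
pairwise overlapping tuples. -/
def ConnectedS (S : Str Rel ar V) : Prop :=
  ∀ u ∈ S.supp, ∀ v ∈ S.supp, Relation.ReflTransGen (Touching S) u v

/-- `S1` is a maximally connected substructure of `S2`. -/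
def MaxConn (S1 S2 : Str Rel ar V) : Prop :=
  Substr S1 S2 ∧ ConnectedS S1 ∧
    ∀ S1' : Str Rel ar V, Substr S1' S2 → ConnectedS S1' → Substr S1 S1' → S1 = S1'

/-- The set of maximally connected substructures of a structure. -/
def split (S : Str Rel ar V) : Set (Str Rel ar V) := { S' | MaxConn S' S }

/-- `split`, lifted to sets of structures. -/
def splitSet (𝒮 : Set (Str Rel ar V)) : Set (Str Rel ar V) := ⋃ S ∈ 𝒮, split S

/-- The smallest equivalence relation containing `R`. -/
def EqvOf (R : V → V → Prop) (a b : V) : Prop :=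
  ∀ E : V → V → Prop, Equivalence E → (∀ x y, R x y → E x y) → E a b

/-- An equivalence relation is compatible with a structure iff any two distinct tuples of
the interpretation of a relation symbol differ at some position modulo the relation. -/
def CompatibleE (S : Str Rel ar V) (E : V → V → Prop) : Prop :=
  ∀ r, ∀ t1 ∈ S.interp r, ∀ t2 ∈ S.interp r, t1 ≠ t2 → ∃ i, ¬ E (t1 i) (t2 i)

/-- The image of a structure under a map on elements. -/
def mapStr (h : V → V) (S : Str Rel ar V) : Str Rel ar V where
  interp r := (fun t => h ∘ t) '' S.interp r
  finite_interp r := (S.finite_interp r).image _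
  finite_active := by
    refine S.finite_active.subset ?_
    intro r hr
    simp only [Set.mem_setOf_eq, ne_eq] at hr ⊢
    intro h0
    exact hr (by rw [h0, Set.image_empty])

/-- `S'` is (a copy over `V` of) the quotient of `S` by the equivalence relation `E`. -/
def QuotBy (S : Str Rel ar V) (E : V → V → Prop) (S' : Str Rel ar V) : Prop :=
  ∃ h : V → V, (∀ u ∈ S.supp, ∀ v ∈ S.supp, (E u v ↔ h u = h v)) ∧ S' = mapStr h S

/-- `S'` is an isomorphic copy of `S` (over the same universe `V`). -/
def IsoCopy (S S' : Str Rel ar V) : Prop :=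
  ∃ h : V → V, Set.InjOn h S.supp ∧ S' = mapStr h S

/-- A matching: a set of pairs such that distinct pairs share no element. -/
def IsMatching (M : Set (V × V)) : Prop :=
  ∀ p ∈ M, ∀ q ∈ M, p ≠ q → ({p.1, p.2} ∩ {q.1, q.2} : Set V) = ∅

/-- The set of internal fusions of a structure: quotients by compatible equivalence
relations (up to isomorphism). -/
def IntFusion (S : Str Rel ar V) : Set (Str Rel ar V) :=
  { S' | ∃ E : V → V → Prop, Equivalence E ∧ CompatibleE S E ∧ QuotBy S E S' }

/-- Internal fusions of members of a set of structures. -/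
def ifSet (𝒮 : Set (Str Rel ar V)) : Set (Str Rel ar V) := ⋃ S ∈ 𝒮, IntFusion S

/-- Internal fusions of a rich canonical model: quotients by compatible equivalence
relations that do not violate the disequality relation `d`. -/
def SIntFusion (S : Str Rel ar V) (d : V → V → Prop) : Set (Str Rel ar V) :=
  { S' | ∃ E : V → V → Prop, Equivalence E ∧ CompatibleE S E ∧
      (∀ u v, d u v → ¬ E u v) ∧ QuotBy S E S' }

/-- External fusions of two structures: quotients of the composition of disjoint
isomorphic copies by the smallest equivalence relation containing a nonempty matching
between supports that is compatible with the composition. -/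
def ExtFusion (S1 S2 : Str Rel ar V) : Set (Str Rel ar V) :=
  { S' | ∃ (S1' S2' : Str Rel ar V) (M : Set (V × V)),
      IsoCopy S1 S1' ∧ IsoCopy S2 S2' ∧ S1'.supp ∩ S2'.supp = ∅ ∧
      M.Nonempty ∧ IsMatching M ∧ (∀ p ∈ M, p.1 ∈ S1'.supp ∧ p.2 ∈ S2'.supp) ∧
      CompatibleE (S1'.comp S2') (EqvOf fun a b => (a, b) ∈ M) ∧
      QuotBy (S1'.comp S2') (EqvOf fun a b => (a, b) ∈ M) S' }

/-- Single-pair external fusions: external fusions whose matching is a single pair. -/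
def ExtFusion1 (S1 S2 : Str Rel ar V) : Set (Str Rel ar V) :=
  { S' | ∃ (S1' S2' : Str Rel ar V) (M : Set (V × V)),
      IsoCopy S1 S1' ∧ IsoCopy S2 S2' ∧ S1'.supp ∩ S2'.supp = ∅ ∧
      (∃ p : V × V, M = {p}) ∧ IsMatching M ∧
      (∀ p ∈ M, p.1 ∈ S1'.supp ∧ p.2 ∈ S2'.supp) ∧
      CompatibleE (S1'.comp S2') (EqvOf fun a b => (a, b) ∈ M) ∧
      QuotBy (S1'.comp S2') (EqvOf fun a b => (a, b) ∈ M) S' }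

/-- Closure of a set of structures under external fusions (structures being identified
up to isomorphism). -/
inductive efStar (𝒮 : Set (Str Rel ar V)) : Str Rel ar V → Prop where
  | base {S : Str Rel ar V} : S ∈ 𝒮 → efStar 𝒮 S
  | iso {S S' : Str Rel ar V} : efStar 𝒮 S → IsoCopy S S' → efStar 𝒮 S'
  | fuse {S1 S2 S : Str Rel ar V} :
      efStar 𝒮 S1 → efStar 𝒮 S2 → S ∈ ExtFusion S1 S2 → efStar 𝒮 S

def efStarSet (𝒮 : Set (Str Rel ar V)) : Set (Str Rel ar V) := { S | efStar 𝒮 S }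

/-- Closure of a set of structures under single-pair external fusions. -/
inductive ef1Star (𝒮 : Set (Str Rel ar V)) : Str Rel ar V → Prop where
  | base {S : Str Rel ar V} : S ∈ 𝒮 → ef1Star 𝒮 S
  | iso {S S' : Str Rel ar V} : ef1Star 𝒮 S → IsoCopy S S' → ef1Star 𝒮 S'
  | fuse {S1 S2 S : Str Rel ar V} :
      ef1Star 𝒮 S1 → ef1Star 𝒮 S2 → S ∈ ExtFusion1 S1 S2 → ef1Star 𝒮 S

def ef1StarSet (𝒮 : Set (Str Rel ar V)) : Set (Str Rel ar V) := { S | ef1Star 𝒮 S }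

/-- Closure of a set of structures under both internal and external fusions. -/
inductive iefStar (𝒮 : Set (Str Rel ar V)) : Str Rel ar V → Prop where
  | base {S : Str Rel ar V} : S ∈ 𝒮 → iefStar 𝒮 S
  | iso {S S' : Str Rel ar V} : iefStar 𝒮 S → IsoCopy S S' → iefStar 𝒮 S'
  | fuse {S1 S2 S : Str Rel ar V} :
      iefStar 𝒮 S1 → iefStar 𝒮 S2 → S ∈ ExtFusion S1 S2 → iefStar 𝒮 S
  | intf {S1 S : Str Rel ar V} : iefStar 𝒮 S1 → S ∈ IntFusion S1 → iefStar 𝒮 S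

def iefStarSet (𝒮 : Set (Str Rel ar V)) : Set (Str Rel ar V) := { S | iefStar 𝒮 S }

/-- The color of an element: the set of relation symbols whose interpretation contains
the constant tuple at this element. -/
def color (S : Str Rel ar V) (u : V) : Set Rel :=
  { r : Rel | (fun _ => u) ∈ S.interp r }

/-- The multiplicity of a color in the multiset color abstraction of a structure. -/
noncomputable def colorMult (S : Str Rel ar V) (C : Set Rel) : ℕ :=
  {u ∈ S.supp | color S u = C}.ncard

/-- The `k`-multiset color abstraction of a structure: the sub-multisets of cardinality
at most `k` of the multiset of colors of its support elements. -/
noncomputable def MkOf (k : ℕ) (S : Str Rel ar V) : Set (Multiset (Set Rel)) :=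
  { M | Multiset.card M ≤ k ∧
      ∀ C : Set Rel, @Multiset.count _ (Classical.decEq _) C M ≤ colorMult S C }

/-- The `k`-multiset color abstraction, lifted to sets of structures. -/
noncomputable def MkSet (k : ℕ) (𝒮 : Set (Str Rel ar V)) : Set (Multiset (Set Rel)) :=
  ⋃ S ∈ 𝒮, MkOf k S

/-- A set of structures conforms to an RGB color scheme iff (1) in any member, if some
support element has a red color then all other support elements have blue colors, and
(2) in any external fusion of members, every green color occurs at most twice. -/
def Conforms (𝒮 : Set (Str Rel ar V)) (P : RGB Rel) : Prop :=
  (∀ S ∈ 𝒮, ∀ u ∈ S.supp, color S u ∈ P.red →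
      ∀ v ∈ S.supp, v ≠ u → color S v ∈ P.blue) ∧
  (∀ S ∈ efStarSet 𝒮, ∀ C ∈ P.green, colorMult S C ≤ 2)

/-- Type `R` structures: only blue and red colors, with exactly one red element. -/
def TypeR (P : RGB Rel) (S : Str Rel ar V) : Prop :=
  (∀ u ∈ S.supp, color S u ∈ P.blue ∨ color S u ∈ P.red) ∧
  {u ∈ S.supp | color S u ∈ P.red}.ncard = 1

/-- Type `G` structures: only blue and green colors, with at least one green element. -/
def TypeG (P : RGB Rel) (S : Str Rel ar V) : Prop :=
  (∀ u ∈ S.supp, color S u ∈ P.blue ∨ color S u ∈ P.green) ∧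
  {u ∈ S.supp | color S u ∈ P.green}.Nonempty

/-- Type `B` structures: only blue colors. -/
def TypeB (P : RGB Rel) (S : Str Rel ar V) : Prop :=
  ∀ u ∈ S.supp, color S u ∈ P.blue

namespace SID

/-- The set of predicate symbols occurring in an SID. -/
def predsOf (Δ : SID Rel ar Pr pa) : Set Pr :=
  {A | Δ.rules A ≠ ∅} ∪ ⋃ A, ⋃ φ ∈ Δ.rules A, SLR.preds φ

/-- The set of relation symbols occurring in an SID. -/
def relsOf (Δ : SID Rel ar Pr pa) : Set Rel :=
  ⋃ A, ⋃ φ ∈ Δ.rules A, SLR.rels φ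

/-- The number of predicate symbols occurring in an SID. -/
noncomputable def Pcount (Δ : SID Rel ar Pr pa) : ℕ := Δ.predsOf.ncard

/-- The number of relation symbols occurring in an SID. -/
noncomputable def Rcount (Δ : SID Rel ar Pr pa) : ℕ := Δ.relsOf.ncard

/-- The maximum number of variables (free or existentially quantified) occurring in a
rule of the SID. -/
noncomputable def maxvar (Δ : SID Rel ar Pr pa) : ℕ :=
  sSup { n | ∃ A, ∃ φ ∈ Δ.rules A, n = ({x | x < pa A} ∪ SLR.vars φ).ncard }

/-- The maximum number of predicate atoms occurring in a rule of the SID. -/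
noncomputable def maxpredatoms (Δ : SID Rel ar Pr pa) : ℕ :=
  sSup { n | ∃ A, ∃ φ ∈ Δ.rules A, n = SLR.npred φ }

/-- The maximum number of relation atoms occurring in a rule of the SID. -/
noncomputable def maxrelatoms (Δ : SID Rel ar Pr pa) : ℕ :=
  sSup { n | ∃ A, ∃ φ ∈ Δ.rules A, n = SLR.nrel φ }

/-- The maximum arity of a relation symbol occurring in the SID. -/
noncomputable def maxrelarity (Δ : SID Rel ar Pr pa) : ℕ :=
  sSup { n | ∃ r ∈ Δ.relsOf, n = ar r }

/-- The maximum arity of a predicate symbol occurring in the SID. -/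
noncomputable def maxpredarity (Δ : SID Rel ar Pr pa) : ℕ :=
  sSup { n | ∃ A ∈ Δ.predsOf, n = pa A }

/-- An SID is equality-free iff all its rules are equality-free. -/
def EqFree (Δ : SID Rel ar Pr pa) : Prop :=
  ∀ A, ∀ φ ∈ Δ.rules A, SLR.EqFreeF φ

end SID

/-- An SID is all-satisfiable for a nullary predicate `A` iff every predicate-free
outcome of a complete unfolding of `A` is satisfiable. -/
def AllSat (Δ : SID Rel ar Pr pa) (A : Pr) : Prop :=
  ∀ χ : SLR Rel ar Pr pa, Unfolds Δ (natom A) χ → χ.PredFree →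
    ∃ (S : Str Rel ar V) (s : ℕ → V), Sat Δ S s χ

/-- An SID is expandable for a nullary predicate `A`: any finite family of pairwise
disjoint canonical models embeds, as a substructure, into a rich canonical model, in a
way that neither disequalities nor overlapping tuples connect two distinct members. -/
def Expandable (Δ : SID Rel ar Pr pa) (A : Pr) : Prop :=
  ∀ (n : ℕ) (Ss : Fin n → Str Rel ar V),
    (∀ i, Ss i ∈ Canonical (V := V) Δ (natom A)) →
    (∀ i j, i ≠ j → (Ss i).supp ∩ (Ss j).supp = ∅) →
    ∃ (S : Str Rel ar V) (d : V → V → Prop),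
      RichCanonical Δ (natom A) S d ∧
      Substr (bigComp Ss) S ∧
      (∀ i j : Fin n, i < j → ∀ u ∈ (Ss i).supp, ∀ v ∈ (Ss j).supp, ¬ d u v) ∧
      ¬ ∃ (r : Rel) (t1 t2 : Fin (ar r) → V) (i j : Fin n),
          t1 ∈ S.interp r ∧ t2 ∈ S.interp r ∧ i < j ∧
          (∃ k, t1 k ∈ (Ss i).supp) ∧ (∃ k, t2 k ∈ (Ss j).supp) ∧ ∃ k l, t1 k = t2 l

/-- The set of structures obtained by internal fusion of rich canonical `Δ`-models. -/
def sifSet (Δ : SID Rel ar Pr pa) (φ : SLR Rel ar Pr pa) : Set (Str Rel ar V) :=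
  { S' | ∃ (S : Str Rel ar V) (d : V → V → Prop),
      RichCanonical Δ φ S d ∧ S' ∈ SIntFusion S d }

end Defs2

end SLRTW
namespace SLRTW

section Aux

variable {Rel : Type} {ar : Rel → ℕ} {V : Type} {Pr : Type} {pa : Pr → ℕ}

open SLR

/-! ### Basic lemmas on formulas -/

lemma fv_finite (φ : SLR Rel ar Pr pa) : φ.fv.Finite := by
  induction φ with
  | emp => simp [SLR.fv]
  | eq x y => exact (Set.finite_singleton y).insert x
  | ne x y => exact (Set.finite_singleton y).insert x
  | rel r a => simpa [SLR.fv] using Set.finite_range a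
  | pred A a => simpa [SLR.fv] using Set.finite_range a
  | star φ ψ ih1 ih2 => simpa [SLR.fv] using ih1.union ih2
  | ex x φ ih => exact (ih.subset (Set.diff_subset))

lemma fv_subset_vars (φ : SLR Rel ar Pr pa) : φ.fv ⊆ φ.vars := by
  induction φ with
  | emp => simp [SLR.fv, SLR.vars]
  | eq x y => simp [SLR.fv, SLR.vars]
  | ne x y => simp [SLR.fv, SLR.vars]
  | rel r a => simp [SLR.fv, SLR.vars]
  | pred A a => simp [SLR.fv, SLR.vars]
  | star φ ψ ih1 ih2 => exact Set.union_subset_union ih1 ih2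
  | ex x φ ih =>
      exact (Set.diff_subset).trans (ih.trans (Set.subset_insert _ _))

/-! ### Subformula positions -/

/-- The subformula at a position (a list of directions). -/
def subAt : SLR Rel ar Pr pa → List Bool → Option (SLR Rel ar Pr pa)
  | φ, [] => some φ
  | .star φ _, false :: l => subAt φ l
  | .star _ ψ, true :: l => subAt ψ l
  | .ex _ φ, false :: l => subAt φ l
  | _, _ => none

@[simp] lemma subAt_nil (φ : SLR Rel ar Pr pa) : subAt φ [] = some φ := by cases φ <;> rfl

@[simp] lemma subAt_star_false (φ ψ : SLR Rel ar Pr pa) (l : List Bool) :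
    subAt (.star φ ψ) (false :: l) = subAt φ l := rfl

@[simp] lemma subAt_star_true (φ ψ : SLR Rel ar Pr pa) (l : List Bool) :
    subAt (.star φ ψ) (true :: l) = subAt ψ l := rfl

@[simp] lemma subAt_ex_false (x : ℕ) (φ : SLR Rel ar Pr pa) (l : List Bool) :
    subAt (.ex x φ) (false :: l) = subAt φ l := rfl

lemma subAt_append (φ : SLR Rel ar Pr pa) (l1 l2 : List Bool) :
    subAt φ (l1 ++ l2) = (subAt φ l1).bind (fun ψ => subAt ψ l2) := by
  induction l1 generalizing φ with
  | nil => simp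
  | cons b t ih =>
      cases φ with
      | star φ ψ => cases b <;> simp [ih]
      | ex x φ => cases b <;> simp [subAt, ih]
      | emp => cases b <;> simp [subAt]
      | eq x y => cases b <;> simp [subAt]
      | ne x y => cases b <;> simp [subAt]
      | rel r a => cases b <;> simp [subAt]
      | pred A a => cases b <;> simp [subAt]

/-- The depth of a formula. -/
def dep : SLR Rel ar Pr pa → ℕ
  | .star φ ψ => max (dep φ) (dep ψ) + 1
  | .ex _ φ => dep φ + 1
  | _ => 0

lemma length_le_dep {φ ψ : SLR Rel ar Pr pa} {l : List Bool}
    (h : subAt φ l = some ψ) : l.length ≤ dep φ := by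
  induction l generalizing φ with
  | nil => simp
  | cons b t ih =>
      cases φ with
      | star φ1 φ2 =>
          cases b with
          | false => simpa [dep] using Nat.succ_le_succ ((ih h).trans (le_max_left _ _))
          | true => simpa [dep] using Nat.succ_le_succ ((ih h).trans (le_max_right _ _))
      | ex x φ1 =>
          cases b with
          | false => simpa [dep] using Nat.succ_le_succ (ih h)
          | true => simp [subAt] at h
      | emp => cases b <;> simp [subAt] at h
      | eq x y => cases b <;> simp [subAt] at h
      | ne x y => cases b <;> simp [subAt] at h
      | rel r a => cases b <;> simp [subAt] at h
      | pred A a => cases b <;> simp [subAt] at h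

lemma subAt_fv_subset {φ ψ : SLR Rel ar Pr pa} {l : List Bool}
    (h : subAt φ l = some ψ) : ψ.fv ⊆ φ.vars := by
  induction l generalizing φ with
  | nil =>
      simp at h; subst h; exact fv_subset_vars φ
  | cons b t ih =>
      cases φ with
      | star φ1 φ2 =>
          cases b with
          | false => exact (ih h).trans (Set.subset_union_left)
          | true => exact (ih h).trans (Set.subset_union_right)
      | ex x φ1 =>
          cases b with
          | false => exact (ih h).trans (Set.subset_insert _ _)
          | true => simp [subAt] at h
      | emp => cases b <;> simp [subAt] at h
      | eq x y => cases b <;> simp [subAt] at h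
      | ne x y => cases b <;> simp [subAt] at h
      | rel r a => cases b <;> simp [subAt] at h
      | pred A a => cases b <;> simp [subAt] at h

end Aux

end SLRTW
namespace SLRTW

section Aux2

variable {Rel : Type} {ar : Rel → ℕ} {V : Type} {Pr : Type} {pa : Pr → ℕ}

open SLR

lemma IsSubst.fv_eq {f : ℕ → ℕ} {φ φ' : SLR Rel ar Pr pa}
    (h : IsSubst f φ φ') : φ'.fv = f '' φ.fv := by
  induction h with
  | emp => simp [SLR.fv]
  | eq => simp [SLR.fv, Set.image_insert_eq]
  | ne => simp [SLR.fv, Set.image_insert_eq]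
  | rel => simp [SLR.fv, Set.range_comp]
  | pred => simp [SLR.fv, Set.range_comp]
  | star h1 h2 ih1 ih2 => simp [SLR.fv, ih1, ih2, Set.image_union]
  | @ex f x z φ φ' hfresh h ih =>
      show φ'.fv \ {z} = f '' (φ.fv \ {x})
      rw [ih]
      ext a
      simp only [Set.mem_diff, Set.mem_image, Set.mem_singleton_iff, Set.mem_diff]
      constructor
      · rintro ⟨⟨y, hy, rfl⟩, hz⟩
        by_cases hyx : y = x
        · subst hyx; simp [Function.update_self] at hz
        · exact ⟨y, ⟨hy, hyx⟩, by simp [Function.update_of_ne hyx]⟩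
      · rintro ⟨y, ⟨hy, hyx⟩, rfl⟩
        exact ⟨⟨y, hy, by simp [Function.update_of_ne hyx]⟩, hfresh y hy hyx⟩

/-- All subformulas of `φ'` have free-variable sets of cardinality at most `K`. -/
def BND (K : ℕ) (φ : SLR Rel ar Pr pa) : Prop :=
  ∀ (l : List Bool) (ψ : SLR Rel ar Pr pa), subAt φ l = some ψ → ψ.fv.ncard ≤ K

lemma IsSubst.subAt {f : ℕ → ℕ} {φ φ' ψ' : SLR Rel ar Pr pa} {l : List Bool}
    (h : IsSubst f φ φ') (hl : subAt φ' l = some ψ') :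
    ∃ (g : ℕ → ℕ) (ψ : SLR Rel ar Pr pa), subAt φ l = some ψ ∧ ψ'.fv = g '' ψ.fv := by
  induction h generalizing l ψ' with
  | @emp f =>
      cases l with
      | nil =>
          simp only [subAt_nil, Option.some.injEq] at hl
          subst hl
          exact ⟨f, _, rfl, IsSubst.fv_eq (IsSubst.emp (f := f))⟩
      | cons b t => cases b <;> simp [SLRTW.subAt] at hl
  | @eq f x y =>
      cases l with
      | nil =>
          simp only [subAt_nil, Option.some.injEq] at hl
          subst hl
          exact ⟨f, _, rfl, IsSubst.fv_eq (IsSubst.eq (f := f))⟩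
      | cons b t => cases b <;> simp [SLRTW.subAt] at hl
  | @ne f x y =>
      cases l with
      | nil =>
          simp only [subAt_nil, Option.some.injEq] at hl
          subst hl
          exact ⟨f, _, rfl, IsSubst.fv_eq (IsSubst.ne (f := f))⟩
      | cons b t => cases b <;> simp [SLRTW.subAt] at hl
  | @rel f r a =>
      cases l with
      | nil =>
          simp only [subAt_nil, Option.some.injEq] at hl
          subst hl
          exact ⟨f, _, rfl, IsSubst.fv_eq (IsSubst.rel (f := f))⟩
      | cons b t => cases b <;> simp [SLRTW.subAt] at hl
  | @pred f A a =>
      cases l with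
      | nil =>
          simp only [subAt_nil, Option.some.injEq] at hl
          subst hl
          exact ⟨f, _, rfl, IsSubst.fv_eq (IsSubst.pred (f := f))⟩
      | cons b t => cases b <;> simp [SLRTW.subAt] at hl
  | @star f φ ψ φ'' ψ'' h1 h2 ih1 ih2 =>
      cases l with
      | nil =>
          simp only [subAt_nil, Option.some.injEq] at hl
          subst hl
          exact ⟨f, _, rfl, IsSubst.fv_eq (IsSubst.star h1 h2)⟩
      | cons b t =>
          cases b with
          | false =>
              obtain ⟨g, ψ0, h0, hfv⟩ := ih1 hl
              exact ⟨g, ψ0, h0, hfv⟩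
          | true =>
              obtain ⟨g, ψ0, h0, hfv⟩ := ih2 hl
              exact ⟨g, ψ0, h0, hfv⟩
  | @ex f x z φ φ'' hfresh h ih =>
      cases l with
      | nil =>
          simp only [subAt_nil, Option.some.injEq] at hl
          subst hl
          exact ⟨f, _, rfl, IsSubst.fv_eq (IsSubst.ex hfresh h)⟩
      | cons b t =>
          cases b with
          | false =>
              obtain ⟨g, ψ0, h0, hfv⟩ := ih hl
              exact ⟨g, ψ0, h0, hfv⟩
          | true => simp [SLRTW.subAt] at hl

lemma bnd_of_isSubst {f : ℕ → ℕ} {φ φ' : SLR Rel ar Pr pa} {K : ℕ}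
    (h : IsSubst f φ φ') (hb : BND K φ) : BND K φ' := by
  intro l ψ' hl
  obtain ⟨g, ψ, h0, hfv⟩ := h.subAt hl
  rw [hfv]
  calc (g '' ψ.fv).ncard ≤ ψ.fv.ncard :=
        Set.ncard_image_le (fv_finite ψ)
    _ ≤ K := hb l ψ h0

lemma Step.fv_subset {Δ : SID Rel ar Pr pa} {φ φ' : SLR Rel ar Pr pa}
    (h : Step Δ φ φ') : φ'.fv ⊆ φ.fv := by
  induction h with
  | @unfold A a body ψ hbody hsub =>
      rw [hsub.fv_eq]
      rintro u ⟨y, hy, rfl⟩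
      have := Δ.wf A body hbody hy
      simp only [Set.mem_setOf_eq] at this
      show (if h : y < pa A then a ⟨y, h⟩ else y) ∈ SLR.fv (.pred A a)
      rw [dif_pos this]
      exact ⟨⟨y, this⟩, rfl⟩
  | starL h ih => exact Set.union_subset_union_left _ ih
  | starR h ih => exact Set.union_subset_union_right _ ih
  | exC h ih => exact Set.diff_subset_diff_left ih

lemma Step.bnd {Δ : SID Rel ar Pr pa} {φ φ' : SLR Rel ar Pr pa} {K : ℕ}
    (hK : ∀ A, ∀ ρ ∈ Δ.rules A, BND K ρ)
    (h : Step Δ φ φ') (hb : BND K φ) : BND K φ' := by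
  induction h with
  | @unfold A a body ψ hbody hsub => exact bnd_of_isSubst hsub (hK A body hbody)
  | @starL φ1 φ1' ψ1 h ih =>
      intro l ψ' hl
      cases l with
      | nil =>
          simp at hl; subst hl
          calc (SLR.fv (.star φ1' ψ1)).ncard
              ≤ (SLR.fv (.star φ1 ψ1)).ncard := by
                apply Set.ncard_le_ncard _ (fv_finite _)
                exact Set.union_subset_union_left _ (Step.fv_subset h)
            _ ≤ K := hb [] _ rfl
      | cons b t =>
          cases b with
          | false => exact ih (fun l ψ hl => hb (false :: l) ψ hl) t ψ' hl
          | true => exact hb (true :: t) ψ' hl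
  | @starR φ1 ψ1 ψ1' h ih =>
      intro l ψ' hl
      cases l with
      | nil =>
          simp at hl; subst hl
          calc (SLR.fv (.star φ1 ψ1')).ncard
              ≤ (SLR.fv (.star φ1 ψ1)).ncard := by
                apply Set.ncard_le_ncard _ (fv_finite _)
                exact Set.union_subset_union_right _ (Step.fv_subset h)
            _ ≤ K := hb [] _ rfl
      | cons b t =>
          cases b with
          | false => exact hb (false :: t) ψ' hl
          | true => exact ih (fun l ψ hl => hb (true :: l) ψ hl) t ψ' hl
  | @exC x φ1 φ1' h ih =>
      intro l ψ' hl
      cases l with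
      | nil =>
          simp at hl; subst hl
          calc (SLR.fv (.ex x φ1')).ncard
              ≤ (SLR.fv (.ex x φ1)).ncard := by
                apply Set.ncard_le_ncard _ (fv_finite _)
                exact Set.diff_subset_diff_left (Step.fv_subset h)
            _ ≤ K := hb [] _ rfl
      | cons b t =>
          cases b with
          | false => exact ih (fun l ψ hl => hb (false :: l) ψ hl) t ψ' hl
          | true => simp [SLRTW.subAt] at hl

lemma Unfolds.bnd {Δ : SID Rel ar Pr pa} {φ φ' : SLR Rel ar Pr pa} {K : ℕ}
    (hK : ∀ A, ∀ ρ ∈ Δ.rules A, BND K ρ)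
    (h : Unfolds Δ φ φ') (hb : BND K φ) : BND K φ' := by
  induction h with
  | refl => exact hb
  | tail _ hstep ih => exact hstep.bnd hK ih

lemma Unfolds.fv_subset {Δ : SID Rel ar Pr pa} {φ φ' : SLR Rel ar Pr pa}
    (h : Unfolds Δ φ φ') : φ'.fv ⊆ φ.fv := by
  induction h with
  | refl => exact subset_rfl
  | tail _ hstep ih => exact hstep.fv_subset.trans ih

/-- Every rule body of `Δ` is `maxvar Δ`-bounded. -/
lemma rules_bnd (Δ : SID Rel ar Pr pa)
    (hvars : ∀ A, ∀ ρ ∈ Δ.rules A, ρ.vars.Finite) :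
    ∀ A, ∀ ρ ∈ Δ.rules A, BND Δ.maxvar ρ := by
  intro A ρ hρ l ψ hl
  have h1 : ψ.fv ⊆ {x | x < pa A} ∪ ρ.vars :=
    (subAt_fv_subset hl).trans Set.subset_union_right
  have hfin : ({x | x < pa A} ∪ ρ.vars).Finite := by
    refine Set.Finite.union ?_ (hvars A ρ hρ)
    exact Set.finite_Iio (pa A)
  calc ψ.fv.ncard ≤ ({x | x < pa A} ∪ ρ.vars).ncard :=
        Set.ncard_le_ncard h1 hfin
    _ ≤ Δ.maxvar := by
        apply le_csSup
        · have : {n | ∃ A, ∃ φ ∈ Δ.rules A, n = ({x | x < pa A} ∪ SLR.vars φ).ncard}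
              ⊆ (fun p : Pr × SLR Rel ar Pr pa =>
                ({x | x < pa p.1} ∪ SLR.vars p.2).ncard) '' {p | p.2 ∈ Δ.rules p.1} := by
            rintro n ⟨B, φ, hφ, rfl⟩
            exact ⟨(B, φ), hφ, rfl⟩
          exact (Δ.finite_rules.image _).subset this |>.bddAbove
        · exact ⟨A, ρ, hρ, rfl⟩

lemma vars_finite (φ : SLR Rel ar Pr pa) : φ.vars.Finite := by
  induction φ with
  | emp => simp [SLR.vars]
  | eq x y => exact (Set.finite_singleton y).insert x
  | ne x y => exact (Set.finite_singleton y).insert x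
  | rel r a => simpa [SLR.vars] using Set.finite_range a
  | pred A a => simpa [SLR.vars] using Set.finite_range a
  | star φ ψ ih1 ih2 => simpa [SLR.vars] using ih1.union ih2
  | ex x φ ih => exact ih.insert x

end Aux2

end SLRTW
namespace SLRTW

section Aux3

variable {Rel : Type} {ar : Rel → ℕ} {V : Type} {Pr : Type} {pa : Pr → ℕ}

open SLR

lemma fv_subset_fv_matrix (φ : SLR Rel ar Pr pa) : φ.fv ⊆ φ.matrix.fv := by
  induction φ with
  | star φ ψ ih1 ih2 =>
      show φ.fv ∪ ψ.fv ⊆ φ.matrix.fv ∪ ψ.matrix.fv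
      exact Set.union_subset_union ih1 ih2
  | ex x φ ih =>
      show φ.fv \ {x} ⊆ φ.matrix.fv
      exact Set.diff_subset.trans ih
  | emp => exact subset_rfl
  | eq x y => exact subset_rfl
  | ne x y => exact subset_rfl
  | rel r a => exact subset_rfl
  | pred A a => exact subset_rfl

lemma matrix_qpf {φ : SLR Rel ar Pr pa} (h : φ.PredFree) : φ.matrix.QPF := by
  induction φ with
  | star φ ψ ih1 ih2 => exact ⟨ih1 h.1, ih2 h.2⟩
  | ex x φ ih => exact ih h
  | emp => trivial
  | eq x y => trivial
  | ne x y => trivial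
  | rel r a => trivial
  | pred A a => exact h

lemma fv_matrix_pos {φ : SLR Rel ar Pr pa} {x : ℕ} (h : x ∈ φ.matrix.fv) :
    ∃ (l : List Bool) (ψ : SLR Rel ar Pr pa), subAt φ l = some ψ ∧ x ∈ ψ.fv := by
  induction φ with
  | star φ ψ ih1 ih2 =>
      rcases h with h | h
      · obtain ⟨l, ψ0, h1, h2⟩ := ih1 h
        exact ⟨false :: l, ψ0, h1, h2⟩
      · obtain ⟨l, ψ0, h1, h2⟩ := ih2 h
        exact ⟨true :: l, ψ0, h1, h2⟩
  | ex y φ ih =>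
      obtain ⟨l, ψ0, h1, h2⟩ := ih h
      exact ⟨false :: l, ψ0, h1, h2⟩
  | emp => exact ⟨[], _, rfl, h⟩
  | eq a b => exact ⟨[], _, rfl, h⟩
  | ne a b => exact ⟨[], _, rfl, h⟩
  | rel r a => exact ⟨[], _, rfl, h⟩
  | pred A a => exact ⟨[], _, rfl, h⟩

lemma pos_fv_subset_matrix {φ ψ : SLR Rel ar Pr pa} {l : List Bool}
    (h : subAt φ l = some ψ) : ψ.fv ⊆ φ.matrix.fv := by
  induction l generalizing φ with
  | nil => simp at h; subst h; exact fv_subset_fv_matrix φ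
  | cons b t ih =>
      cases φ with
      | star φ1 φ2 =>
          cases b with
          | false => exact (ih h).trans Set.subset_union_left
          | true => exact (ih h).trans Set.subset_union_right
      | ex x φ1 =>
          cases b with
          | false => exact ih (φ := φ1) (by simpa using h)
          | true => simp [SLRTW.subAt] at h
      | emp => cases b <;> simp [SLRTW.subAt] at h
      | eq x y => cases b <;> simp [SLRTW.subAt] at h
      | ne x y => cases b <;> simp [SLRTW.subAt] at h
      | rel r a => cases b <;> simp [SLRTW.subAt] at h
      | pred A a => cases b <;> simp [SLRTW.subAt] at h

lemma eqOccurs_matrix_pos {φ : SLR Rel ar Pr pa} {x y : ℕ}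
    (h : φ.matrix.eqOccurs x y) :
    ∃ (l : List Bool) (a b : ℕ), subAt φ l = some (.eq a b) ∧
      ((a = x ∧ b = y) ∨ (a = y ∧ b = x)) := by
  induction φ with
  | star φ ψ ih1 ih2 =>
      rcases h with h | h
      · obtain ⟨l, a, b, h1, h2⟩ := ih1 h
        exact ⟨false :: l, a, b, h1, h2⟩
      · obtain ⟨l, a, b, h1, h2⟩ := ih2 h
        exact ⟨true :: l, a, b, h1, h2⟩
  | ex z φ ih =>
      obtain ⟨l, a, b, h1, h2⟩ := ih h
      exact ⟨false :: l, a, b, h1, h2⟩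
  | emp => exact absurd h id
  | eq a b => exact ⟨[], a, b, rfl, h⟩
  | ne a b => exact absurd h id
  | rel r a => exact absurd h id
  | pred A a => exact absurd h id

/-- Occurrence of a relation atom in a formula. -/
inductive RO : SLR Rel ar Pr pa → (r : Rel) → (Fin (ar r) → ℕ) → Prop where
  | rel {r : Rel} {a : Fin (ar r) → ℕ} : RO (.rel r a) r a
  | starL {φ ψ : SLR Rel ar Pr pa} {r a} : RO φ r a → RO (.star φ ψ) r a
  | starR {φ ψ : SLR Rel ar Pr pa} {r a} : RO ψ r a → RO (.star φ ψ) r a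
  | ex {x : ℕ} {φ : SLR Rel ar Pr pa} {r a} : RO φ r a → RO (.ex x φ) r a

lemma RO.fv_subset {φ : SLR Rel ar Pr pa} {r : Rel} {a : Fin (ar r) → ℕ}
    (h : RO φ r a) (hq : φ.QPF) : Set.range a ⊆ φ.fv := by
  induction h with
  | rel => exact subset_rfl
  | starL h ih => exact (ih hq.1).trans Set.subset_union_left
  | starR h ih => exact (ih hq.2).trans Set.subset_union_right
  | ex h ih => exact absurd hq id

lemma RO.matrix_pos {φ : SLR Rel ar Pr pa} {r : Rel} {a : Fin (ar r) → ℕ}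
    (h : RO φ.matrix r a) : ∃ l : List Bool, subAt φ l = some (.rel r a) := by
  induction φ with
  | star φ ψ ih1 ih2 =>
      cases h with
      | starL h => obtain ⟨l, hl⟩ := ih1 h; exact ⟨false :: l, hl⟩
      | starR h => obtain ⟨l, hl⟩ := ih2 h; exact ⟨true :: l, hl⟩
  | ex z φ ih =>
      obtain ⟨l, hl⟩ := ih h
      exact ⟨false :: l, hl⟩
  | emp => cases h
  | eq a b => cases h
  | ne a b => cases h
  | rel r' a' => cases h; exact ⟨[], rfl⟩
  | pred A a' => cases h

end Aux3

end SLRTW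
namespace SLRTW

section Aux4

variable {Rel : Type} {ar : Rel → ℕ} {V : Type} {Pr : Type} {pa : Pr → ℕ}

open SLR

/-- The empty structure. -/
def emptyStr : Str Rel ar V where
  interp _ := ∅
  finite_interp _ := Set.finite_empty
  finite_active := by simp

lemma emptyStr_empS : EmpS (emptyStr : Str Rel ar V) := fun _ => rfl

lemma sat_eqOccurs {Δ : SID Rel ar Pr pa} {S : Str Rel ar V} {s : ℕ → V}
    {ψ : SLR Rel ar Pr pa} (hq : ψ.QPF) (hsat : Sat Δ S s ψ) {x y : ℕ}
    (h : ψ.eqOccurs x y) : s x = s y := by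
  induction ψ generalizing S with
  | eq a b =>
      cases hsat with
      | eq _ hab =>
          rcases h with ⟨rfl, rfl⟩ | ⟨rfl, rfl⟩
          · exact hab
          · exact hab.symm
  | star φ1 φ2 ih1 ih2 =>
      cases hsat with
      | star hd h1 h2 =>
          rcases h with h | h
          · exact ih1 hq.1 h1 h
          · exact ih2 hq.2 h2 h
  | emp => exact absurd h id
  | ne a b => exact absurd h id
  | rel r a => exact absurd h id
  | pred A a => exact absurd h id
  | ex z φ ih => exact absurd hq id

lemma RO.mem_interp {Δ : SID Rel ar Pr pa} {S : Str Rel ar V} {s : ℕ → V}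
    {ψ : SLR Rel ar Pr pa} {r : Rel} {a : Fin (ar r) → ℕ}
    (hq : ψ.QPF) (hsat : Sat Δ S s ψ) (h : RO ψ r a) :
    (fun i => s (a i)) ∈ S.interp r := by
  induction h generalizing S with
  | rel =>
      cases hsat with
      | rel hr _ => rw [hr]; rfl
  | starL h ih =>
      cases hsat with
      | star hd h1 h2 => exact Set.mem_union_left _ (ih hq.1 h1)
  | starR h ih =>
      cases hsat with
      | star hd h1 h2 => exact Set.mem_union_right _ (ih hq.2 h2)
  | ex h ih => exact absurd hq id

lemma mem_interp_RO {Δ : SID Rel ar Pr pa} {S : Str Rel ar V} {s : ℕ → V}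
    {ψ : SLR Rel ar Pr pa} (hq : ψ.QPF) (hsat : Sat Δ S s ψ) {r : Rel}
    {t : Fin (ar r) → V} (ht : t ∈ S.interp r) :
    ∃ a : Fin (ar r) → ℕ, RO ψ r a ∧ t = fun i => s (a i) := by
  induction ψ generalizing S with
  | emp => cases hsat with | emp he => rw [he r] at ht; exact absurd ht (Set.notMem_empty t)
  | eq a b => cases hsat with | eq he _ => rw [he r] at ht; exact absurd ht (Set.notMem_empty t)
  | ne a b => cases hsat with | ne he _ => rw [he r] at ht; exact absurd ht (Set.notMem_empty t)
  | rel r' a' =>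
      cases hsat with
      | rel hr hother =>
          by_cases hrr : r = r'
          · subst hrr
            rw [hr] at ht
            exact ⟨a', RO.rel, ht⟩
          · rw [hother r (fun hc => hrr hc)] at ht
            exact absurd ht (Set.notMem_empty t)
  | star φ1 φ2 ih1 ih2 =>
      cases hsat with
      | star hd h1 h2 =>
          rcases ht with ht | ht
          · obtain ⟨a, hro, hta⟩ := ih1 hq.1 h1 ht
            exact ⟨a, hro.starL, hta⟩
          · obtain ⟨a, hro, hta⟩ := ih2 hq.2 h2 ht
            exact ⟨a, hro.starR, hta⟩
  | pred A a => exact absurd hq id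
  | ex z φ ih => exact absurd hq id

/-- The structure interpreting `r` as the single tuple `t` and all others as `∅`. -/
def relStr (r : Rel) (t : Fin (ar r) → V) : Str Rel ar V where
  interp r' := {t' | ∃ h : r = r', t' = h ▸ t}
  finite_interp r' := by
    apply Set.Subsingleton.finite
    rintro t1 ⟨rfl, rfl⟩ t2 ⟨h2, rfl⟩
    rfl
  finite_active := by
    apply Set.Finite.subset (Set.finite_singleton r)
    intro r' hr'
    simp only [Set.mem_setOf_eq, ne_eq] at hr'
    by_contra hne
    apply hr'
    ext t'
    simp only [Set.mem_setOf_eq, Set.mem_empty_iff_false, iff_false]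
    rintro ⟨rfl, _⟩
    exact hne rfl

lemma relStr_interp_self (r : Rel) (t : Fin (ar r) → V) :
    (relStr r t).interp r = {t} := by
  ext t'
  constructor
  · rintro ⟨h, rfl⟩
    rfl
  · rintro rfl
    exact ⟨rfl, rfl⟩

lemma relStr_interp_ne {r r' : Rel} (t : Fin (ar r) → V)
    (hne : r ≠ r') : (relStr r t).interp r' = ∅ := by
  ext t'
  simp only [Set.mem_empty_iff_false, iff_false]
  rintro ⟨rfl, _⟩
  exact hne rfl

/-- Remodeling: a satisfiable qpf formula is satisfied by any store that identifies
at least the equated variables and at most the variables identified by `s`. -/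
lemma remodel {Δ : SID Rel ar Pr pa} {S : Str Rel ar V} {s : ℕ → V}
    {ψ : SLR Rel ar Pr pa} (hq : ψ.QPF) (hsat : Sat Δ S s ψ) (s' : ℕ → V)
    (hs' : ∀ x y, ψ.eqOccurs x y → s' x = s' y)
    (hinj : ∀ x y, s' x = s' y → s x = s y) :
    ∃ S' : Str Rel ar V, Sat Δ S' s' ψ ∧
      ∀ r t, t ∈ S'.interp r → ∃ a, RO ψ r a ∧ t = fun i => s' (a i) := by
  induction ψ generalizing S with
  | emp =>
      exact ⟨emptyStr, Sat.emp emptyStr_empS, fun r t ht => absurd ht (Set.notMem_empty t)⟩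
  | eq a b =>
      exact ⟨emptyStr, Sat.eq emptyStr_empS (hs' a b (Or.inl ⟨rfl, rfl⟩)),
        fun r t ht => absurd ht (Set.notMem_empty t)⟩
  | ne a b =>
      cases hsat with
      | ne _ hab =>
          exact ⟨emptyStr, Sat.ne emptyStr_empS (fun hc => hab (hinj a b hc)),
            fun r t ht => absurd ht (Set.notMem_empty t)⟩
  | rel r a =>
      refine ⟨relStr r (fun i => s' (a i)), Sat.rel (relStr_interp_self _ _) ?_, ?_⟩
      · intro r' hne
        exact relStr_interp_ne _ (fun h => hne h.symm)
      · intro r' t ht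
        rcases eq_or_ne r r' with rfl | hne
        · rw [relStr_interp_self] at ht
          exact ⟨a, RO.rel, ht⟩
        · rw [relStr_interp_ne _ hne] at ht
          exact absurd ht (Set.notMem_empty t)
  | star φ1 φ2 ih1 ih2 =>
      cases hsat with
      | @star S1 S2 _ _ _ hd h1 h2 =>
          obtain ⟨S1', hsat1, hc1⟩ := ih1 hq.1 h1 (fun x y h => hs' x y (Or.inl h))
          obtain ⟨S2', hsat2, hc2⟩ := ih2 hq.2 h2 (fun x y h => hs' x y (Or.inr h))
          refine ⟨S1'.comp S2', Sat.star ?_ hsat1 hsat2, ?_⟩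
          · intro r
            ext t
            simp only [Set.mem_inter_iff, Set.mem_empty_iff_false, iff_false, not_and]
            intro ht1 ht2
            obtain ⟨a, hra, rfl⟩ := hc1 r t ht1
            obtain ⟨b, hrb, hab⟩ := hc2 r _ ht2
            have hsab : (fun i => s (a i)) = fun i => s (b i) := by
              funext i
              exact hinj _ _ (congrFun hab i)
            have hma := RO.mem_interp hq.1 h1 hra
            have hmb := RO.mem_interp hq.2 h2 hrb
            rw [hsab] at hma
            have hdr := hd r
            have hmem : (fun i => s (b i)) ∈ S1.interp r ∩ S2.interp r := ⟨hma, hmb⟩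
            rw [hdr] at hmem
            exact hmem
          · intro r t ht
            rcases ht with ht | ht
            · obtain ⟨a, hra, rfl⟩ := hc1 r t ht
              exact ⟨a, hra.starL, rfl⟩
            · obtain ⟨a, hra, rfl⟩ := hc2 r t ht
              exact ⟨a, hra.starR, rfl⟩
  | pred A a => exact absurd hq id
  | ex z φ ih => exact absurd hq id

/-- Syntactic equality closure of the equalities occurring in `ψ`. -/
def EC (ψ : SLR Rel ar Pr pa) : ℕ → ℕ → Prop :=
  Relation.ReflTransGen (fun a b => ψ.eqOccurs a b ∨ ψ.eqOccurs b a)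

lemma EC.refl {ψ : SLR Rel ar Pr pa} (x : ℕ) : EC ψ x x := Relation.ReflTransGen.refl

lemma EC.trans {ψ : SLR Rel ar Pr pa} {x y z : ℕ} (h1 : EC ψ x y) (h2 : EC ψ y z) :
    EC ψ x z := Relation.ReflTransGen.trans h1 h2

lemma EC.symm {ψ : SLR Rel ar Pr pa} {x y : ℕ} (h : EC ψ x y) : EC ψ y x := by
  induction h with
  | refl => exact EC.refl x
  | tail _ hstep ih =>
      exact Relation.ReflTransGen.trans (Relation.ReflTransGen.single hstep.symm) ih

/-- Canonical representative of the `EC`-class of a variable. -/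
noncomputable def rp (ψ : SLR Rel ar Pr pa) (x : ℕ) : ℕ := sInf {y | EC ψ x y}

lemma EC_rp (ψ : SLR Rel ar Pr pa) (x : ℕ) : EC ψ x (rp ψ x) :=
  Nat.sInf_mem (⟨x, EC.refl x⟩ : {y | EC ψ x y}.Nonempty)

lemma rp_eq_of_EC {ψ : SLR Rel ar Pr pa} {x y : ℕ} (h : EC ψ x y) :
    rp ψ x = rp ψ y := by
  unfold rp
  congr 1
  ext z
  exact ⟨fun hz => (h.symm).trans hz, fun hz => h.trans hz⟩

lemma EC_of_rp_eq {ψ : SLR Rel ar Pr pa} {x y : ℕ} (h : rp ψ x = rp ψ y) :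
    EC ψ x y := by
  have h1 := EC_rp ψ x
  have h2 := EC_rp ψ y
  rw [h] at h1
  exact h1.trans h2.symm

lemma sat_EC_eq {Δ : SID Rel ar Pr pa} {S : Str Rel ar V} {s : ℕ → V}
    {ψ : SLR Rel ar Pr pa} (hq : ψ.QPF) (hsat : Sat Δ S s ψ) {x y : ℕ}
    (h : EC ψ x y) : s x = s y := by
  induction h with
  | refl => rfl
  | tail _ hstep ih =>
      rcases hstep with hstep | hstep
      · exact ih.trans (sat_eqOccurs hq hsat hstep)
      · exact ih.trans (sat_eqOccurs hq hsat hstep).symm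

end Aux4

end SLRTW
namespace SLRTW

section Aux5

variable {α : Type*}

/-- Parent-connectivity: all elements of `S` are joined to a common root by
`p`-chains lying inside `S`. -/
def PConn (p : α → α) (S : Set α) : Prop :=
  ∃ r ∈ S, ∀ n ∈ S, ∃ k, p^[k] n = r ∧ ∀ j ≤ k, p^[j] n ∈ S

lemma pconn_union_aux {p : α → α} {S1 S2 : Set α} {r1 r2 z : α} {k1 k2 : ℕ}
    (c1 : ∀ n ∈ S1, ∃ k, p^[k] n = r1 ∧ ∀ j ≤ k, p^[j] n ∈ S1)
    (hr2 : r2 ∈ S2)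
    (c2 : ∀ n ∈ S2, ∃ k, p^[k] n = r2 ∧ ∀ j ≤ k, p^[j] n ∈ S2)
    (hz1 : z ∈ S1) (hz2 : z ∈ S2) (hk : k1 ≤ k2)
    (e1 : p^[k1] z = r1) (e2 : p^[k2] z = r2) (m2 : ∀ j ≤ k2, p^[j] z ∈ S2) :
    PConn p (S1 ∪ S2) := by
  have hchain : ∀ j ≤ k2 - k1, p^[j] r1 = p^[k1 + j] z := by
    intro j hj
    rw [← e1, ← Function.iterate_add_apply, Nat.add_comm]
  refine ⟨r2, Or.inr hr2, ?_⟩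
  rintro n (hn | hn)
  · obtain ⟨k, e, m⟩ := c1 n hn
    refine ⟨k + (k2 - k1), ?_, ?_⟩
    · rw [Nat.add_comm, Function.iterate_add_apply, e, hchain (k2 - k1) le_rfl]
      rw [← e2]
      congr 1
      omega
    · intro j hj
      by_cases hjk : j ≤ k
      · exact Or.inl (m j hjk)
      · have hj' : j - k ≤ k2 - k1 := by omega
        have : p^[j] n = p^[j - k] r1 := by
          rw [← e, ← Function.iterate_add_apply]
          congr 1
          omega
        rw [this, hchain _ hj']
        exact Or.inr (m2 _ (by omega))
  · obtain ⟨k, e, m⟩ := c2 n hn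
    exact ⟨k, e, fun j hj => Or.inr (m j hj)⟩

lemma pconn_union {p : α → α} {S1 S2 : Set α}
    (h1 : PConn p S1) (h2 : PConn p S2) (hz : (S1 ∩ S2).Nonempty) :
    PConn p (S1 ∪ S2) := by
  obtain ⟨r1, hr1, c1⟩ := h1
  obtain ⟨r2, hr2, c2⟩ := h2
  obtain ⟨z, hz1, hz2⟩ := hz
  obtain ⟨k1, e1, m1⟩ := c1 z hz1
  obtain ⟨k2, e2, m2⟩ := c2 z hz2
  rcases le_total k1 k2 with hk | hk
  · exact pconn_union_aux c1 hr2 c2 hz1 hz2 hk e1 e2 m2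
  · rw [Set.union_comm]
    exact pconn_union_aux c2 hr1 c1 hz2 hz1 hk e2 e1 m1

lemma pconn_subset_eq {p : α → α} {S T : Set α} (h : PConn p S) (hTS : T ⊆ S)
    (hST : S ⊆ T) : PConn p T := by
  rwa [Set.Subset.antisymm hST hTS] at h

end Aux5

end SLRTW
namespace SLRTW

section Aux6

variable {Rel : Type} {ar : Rel → ℕ} {Pr : Type} {pa : Pr → ℕ}

open SLR

/-- Valid positions in a formula. -/
def Pos (χ : SLR Rel ar Pr pa) : Type := {l : List Bool // (subAt χ l).isSome}

/-- The subformula at a valid position. -/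
def Pos.sub {χ : SLR Rel ar Pr pa} (n : Pos χ) : SLR Rel ar Pr pa :=
  (subAt χ n.val).get n.2

lemma Pos.sub_eq {χ : SLR Rel ar Pr pa} (n : Pos χ) : subAt χ n.val = some n.sub :=
  (Option.some_get n.2).symm

lemma Pos.sub_unique {χ : SLR Rel ar Pr pa} {n : Pos χ} {ψ : SLR Rel ar Pr pa}
    (h : subAt χ n.val = some ψ) : n.sub = ψ := by
  rw [n.sub_eq] at h
  exact Option.some.inj h

lemma isSome_dropLast {χ : SLR Rel ar Pr pa} {l : List Bool}
    (h : (subAt χ l).isSome) : (subAt χ l.dropLast).isSome := by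
  rcases List.eq_nil_or_concat l with rfl | ⟨l', b, rfl⟩
  · exact h
  · rw [List.concat_eq_append] at h ⊢
    rw [List.dropLast_concat]
    rw [subAt_append] at h
    cases hl : subAt χ l' with
    | none => rw [hl] at h; simp at h
    | some ψ => simp

/-- The parent of a position. -/
def Pos.par {χ : SLR Rel ar Pr pa} (n : Pos χ) : Pos χ :=
  ⟨n.val.dropLast, isSome_dropLast n.2⟩

lemma Pos.par_concat {χ : SLR Rel ar Pr pa} {n : Pos χ} {l : List Bool} {b : Bool}
    (h : n.val = l ++ [b]) : n.par.val = l := by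
  simp [Pos.par, h, List.dropLast_concat]

/-- Structure of a non-root position: its parent's subformula has it as a child. -/
lemma Pos.parent_step {χ : SLR Rel ar Pr pa} (n : Pos χ) {l : List Bool} {b : Bool}
    (h : n.val = l ++ [b]) :
    ∃ ψp, subAt χ l = some ψp ∧ subAt ψp [b] = some n.sub := by
  have := n.sub_eq
  rw [h, subAt_append] at this
  cases hl : subAt χ l with
  | none => rw [hl] at this; simp at this
  | some ψp =>
      rw [hl] at this
      exact ⟨ψp, rfl, this⟩

/-- One-step free-variable tracking. -/
lemma fv_child_step {ψp ψc : SLR Rel ar Pr pa} {b : Bool} {x : ℕ}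
    (h : subAt ψp [b] = some ψc) (hx : x ∈ ψc.fv) :
    x ∈ ψp.fv ∨ ∃ φ0, ψp = .ex x φ0 := by
  cases ψp with
  | star φ1 φ2 =>
      cases b with
      | false =>
          simp only [subAt_star_false, subAt_nil, Option.some.injEq] at h
          subst h
          exact Or.inl (Set.mem_union_left _ hx)
      | true =>
          simp only [subAt_star_true, subAt_nil, Option.some.injEq] at h
          subst h
          exact Or.inl (Set.mem_union_right _ hx)
  | ex y φ0 =>
      cases b with
      | false =>
          simp only [subAt_ex_false, subAt_nil, Option.some.injEq] at h
          subst h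
          by_cases hxy : x = y
          · subst hxy
            exact Or.inr ⟨φ0, rfl⟩
          · exact Or.inl ⟨hx, hxy⟩
      | true => simp [subAt] at h
  | emp => cases b <;> simp [subAt] at h
  | eq u v => cases b <;> simp [subAt] at h
  | ne u v => cases b <;> simp [subAt] at h
  | rel r a => cases b <;> simp [subAt] at h
  | pred A a => cases b <;> simp [subAt] at h

lemma binder_mem_of_subAt {φ ψ : SLR Rel ar Pr pa} {l : List Bool} {x : ℕ}
    (h : subAt φ l = some (.ex x ψ)) : x ∈ φ.binders := by
  induction l generalizing φ with
  | nil =>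
      simp at h
      subst h
      exact List.mem_cons_self
  | cons b t ih =>
      cases φ with
      | star φ1 φ2 =>
          cases b with
          | false => exact List.mem_append_left _ (ih h)
          | true => exact List.mem_append_right _ (ih h)
      | ex y φ0 =>
          cases b with
          | false => exact List.mem_cons_of_mem y (ih (by simpa using h))
          | true => simp [subAt] at h
      | emp => cases b <;> simp [subAt] at h
      | eq u v => cases b <;> simp [subAt] at h
      | ne u v => cases b <;> simp [subAt] at h
      | rel r a => cases b <;> simp [subAt] at h
      | pred A a => cases b <;> simp [subAt] at h

lemma binder_pos_unique {φ : SLR Rel ar Pr pa} (hnd : φ.binders.Nodup)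
    {l1 l2 : List Bool} {x : ℕ} {ψ1 ψ2 : SLR Rel ar Pr pa}
    (h1 : subAt φ l1 = some (.ex x ψ1)) (h2 : subAt φ l2 = some (.ex x ψ2)) :
    l1 = l2 := by
  induction φ generalizing l1 l2 with
  | star φ1 φ2 ih1 ih2 =>
      have hd : φ1.binders.Disjoint φ2.binders :=
        List.disjoint_of_nodup_append hnd
      cases l1 with
      | nil => simp at h1
      | cons b1 t1 =>
          cases l2 with
          | nil => simp at h2
          | cons b2 t2 =>
              cases b1 <;> cases b2
              · exact congrArg (List.cons false)
                  (ih1 (List.Nodup.of_append_left hnd) h1 h2)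
              · exact absurd (binder_mem_of_subAt (φ := φ2) h2)
                  (hd (binder_mem_of_subAt (φ := φ1) h1))
              · exact absurd (binder_mem_of_subAt (φ := φ1) h2)
                  (fun hm => hd hm (binder_mem_of_subAt (φ := φ2) h1))
              · exact congrArg (List.cons true)
                  (ih2 (List.Nodup.of_append_right hnd) h1 h2)
  | ex y φ0 ih =>
      have hy : y ∉ φ0.binders := (List.nodup_cons.mp hnd).1
      cases l1 with
      | nil =>
          simp only [subAt_nil, Option.some.injEq] at h1
          cases l2 with
          | nil => rfl
          | cons b2 t2 =>
              cases b2 with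
              | false =>
                  cases h1
                  exact absurd (binder_mem_of_subAt (by simpa using h2)) hy
              | true => simp [subAt] at h2
      | cons b1 t1 =>
          cases l2 with
          | nil =>
              simp only [subAt_nil, Option.some.injEq] at h2
              cases b1 with
              | false =>
                  cases h2
                  exact absurd (binder_mem_of_subAt (by simpa using h1)) hy
              | true => simp [subAt] at h1
          | cons b2 t2 =>
              cases b1 with
              | false =>
                  cases b2 with
                  | false =>
                      exact congrArg (List.cons false)
                        (ih (List.Nodup.of_cons hnd) (by simpa using h1)
                          (by simpa using h2))
                  | true => simp [subAt] at h2
              | true => simp [subAt] at h1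
  | emp =>
      cases l1 with
      | nil => simp at h1
      | cons b t => cases b <;> simp [subAt] at h1
  | eq u v =>
      cases l1 with
      | nil => simp at h1
      | cons b t => cases b <;> simp [subAt] at h1
  | ne u v =>
      cases l1 with
      | nil => simp at h1
      | cons b t => cases b <;> simp [subAt] at h1
  | rel r a =>
      cases l1 with
      | nil => simp at h1
      | cons b t => cases b <;> simp [subAt] at h1
  | pred A a =>
      cases l1 with
      | nil => simp at h1
      | cons b t => cases b <;> simp [subAt] at h1

/-- In a subAt step from an `ex` formula, the direction must be `false`. -/
lemma subAt_ex_step {x : ℕ} {φ0 ψ : SLR Rel ar Pr pa} {b : Bool}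
    (h : subAt (.ex x φ0) [b] = some ψ) : b = false ∧ ψ = φ0 := by
  cases b with
  | false => simpa using h.symm
  | true => simp [subAt] at h

/-- The set of positions whose subformula contains `x` free. -/
def NVar (χ : SLR Rel ar Pr pa) (x : ℕ) : Set (Pos χ) :=
  {n | x ∈ n.sub.fv}

lemma Pos.sub_root {χ : SLR Rel ar Pr pa} {n : Pos χ} (h : n.val = []) :
    n.sub = χ := Pos.sub_unique (by rw [h, subAt_nil])

lemma pconn_NVar {χ : SLR Rel ar Pr pa} (hfv : χ.fv = ∅)
    (hnd : χ.binders.Nodup) {x : ℕ} (hne : (NVar χ x).Nonempty) :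
    PConn Pos.par (NVar χ x) := by
  classical
  obtain ⟨n0, hn0⟩ := hne
  have hroot_not : ∀ n : Pos χ, n.val = [] → n ∉ NVar χ x := by
    intro n h hn
    rw [NVar, Set.mem_setOf_eq, Pos.sub_root h, hfv] at hn
    exact hn
  -- find the binder position for x
  have hex : ∃ (lb : List Bool) (φ0 : SLR Rel ar Pr pa),
      subAt χ lb = some (.ex x φ0) := by
    have claim : ∀ (len : ℕ) (n : Pos χ), n.val.length ≤ len → n ∈ NVar χ x →
        ∃ (lb : List Bool) (φ0 : SLR Rel ar Pr pa), subAt χ lb = some (.ex x φ0) := by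
      intro len
      induction len with
      | zero =>
          intro n hlen hn
          exact absurd hn (hroot_not n (List.eq_nil_of_length_eq_zero (Nat.le_zero.mp hlen)))
      | succ len ih =>
          intro n hlen hn
          rcases List.eq_nil_or_concat n.val with hnil | ⟨l, b, hcat⟩
          · exact absurd hn (hroot_not n hnil)
          · rw [List.concat_eq_append] at hcat
            obtain ⟨ψp, hψp, hstep⟩ := n.parent_step hcat
            rcases fv_child_step hstep hn with hx | ⟨φ0, rfl⟩
            · have hpar : n.par ∈ NVar χ x := by
                have hsp : n.par.sub = ψp :=
                  Pos.sub_unique (by rw [Pos.par_concat hcat]; exact hψp)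
                rw [NVar, Set.mem_setOf_eq, hsp]
                exact hx
              refine ih n.par ?_ hpar
              have : n.par.val.length + 1 = n.val.length := by
                rw [Pos.par_concat hcat, hcat]
                simp
              omega
            · exact ⟨l, φ0, hψp⟩
    exact claim n0.val.length n0 le_rfl hn0
  obtain ⟨lb, φ0, hlb⟩ := hex
  have hrval : (subAt χ (lb ++ [false])).isSome := by
    rw [subAt_append, hlb]
    simp
  have hrpar : ∀ n : Pos χ, n.val = lb ++ [false] → n = (⟨lb ++ [false], hrval⟩ : Pos χ) :=
    fun n h => Subtype.ext h
  set r : Pos χ := ⟨lb ++ [false], hrval⟩ with hr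
  -- main climb
  have main : ∀ (len : ℕ) (n : Pos χ), n.val.length ≤ len → n ∈ NVar χ x →
      ∃ k, Pos.par^[k] n = r ∧ ∀ j ≤ k, Pos.par^[j] n ∈ NVar χ x := by
    intro len
    induction len with
    | zero =>
        intro n hlen hn
        exact absurd hn (hroot_not n (List.eq_nil_of_length_eq_zero (Nat.le_zero.mp hlen)))
    | succ len ih =>
        intro n hlen hn
        by_cases hnr : n = r
        · exact ⟨0, by rw [Function.iterate_zero_apply, hnr],
            fun j hj => by
              rw [Nat.le_zero.mp hj, Function.iterate_zero_apply]
              exact hn⟩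
        · rcases List.eq_nil_or_concat n.val with hnil | ⟨l, b, hcat⟩
          · exact absurd hn (hroot_not n hnil)
          · rw [List.concat_eq_append] at hcat
            obtain ⟨ψp, hψp, hstep⟩ := n.parent_step hcat
            rcases fv_child_step hstep hn with hx | ⟨φ1, hφ1⟩
            · have hpar : n.par ∈ NVar χ x := by
                have hsp : n.par.sub = ψp :=
                  Pos.sub_unique (by rw [Pos.par_concat hcat]; exact hψp)
                rw [NVar, Set.mem_setOf_eq, hsp]
                exact hx
              have hlen' : n.par.val.length ≤ len := by
                have : n.par.val.length + 1 = n.val.length := by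
                  rw [Pos.par_concat hcat, hcat]
                  simp
                omega
              obtain ⟨k, hk, hchain⟩ := ih n.par hlen' hpar
              refine ⟨k + 1, ?_, ?_⟩
              · rw [Function.iterate_succ_apply, hk]
              · intro j hj
                cases j with
                | zero => exact hn
                | succ j' =>
                    rw [Function.iterate_succ_apply]
                    exact hchain j' (by omega)
            · exfalso
              apply hnr
              apply hrpar
              have hlb' : l = lb := by
                subst hφ1
                exact binder_pos_unique hnd hψp hlb
              have hb : b = false := by
                subst hφ1
                exact (subAt_ex_step hstep).1
              rw [hcat, hlb', hb]
  obtain ⟨k0, hk0, hchain0⟩ := main n0.val.length n0 le_rfl hn0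
  exact ⟨r, hk0 ▸ hchain0 k0 le_rfl, fun n hn => main n.val.length n le_rfl hn⟩

end Aux6

end SLRTW
namespace SLRTW

section Aux7

open SLR

lemma isAcyclic_of_parent {α : Type*} (G : SimpleGraph α) (par : α → α) (rk : α → ℕ)
    (h : ∀ a b, G.Adj a b → (a = par b ∧ rk a < rk b) ∨ (b = par a ∧ rk b < rk a)) :
    G.IsAcyclic := by
  classical
  have key : ∀ (u : α) (c : G.Walk u u), c.IsCycle →
      (∀ w ∈ c.support, rk w ≤ rk u) → False := by
    intro u c hc hmax
    cases c with
    | nil => exact SimpleGraph.Walk.IsCycle.not_of_nil hc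
    | @cons _ b _ hadj p =>
        rw [SimpleGraph.Walk.cons_isCycle_iff] at hc
        obtain ⟨hpath, hedge⟩ := hc
        have hbu : b = par u := by
          rcases h u b hadj with ⟨_, hlt⟩ | ⟨hb, _⟩
          · exfalso
            have : b ∈ (SimpleGraph.Walk.cons hadj p).support := by
              simp [SimpleGraph.Walk.support_cons]
            exact absurd (hmax b this) (by omega)
          · exact hb
        obtain ⟨y, hadj2, q, hrev⟩ :=
          SimpleGraph.Walk.exists_eq_cons_of_ne hadj.ne p.reverse
        have hyu : y = par u := by
          rcases h u y hadj2 with ⟨_, hlt⟩ | ⟨hy, _⟩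
          · exfalso
            have hy1 : y ∈ p.reverse.support := by
              rw [hrev]
              simp [SimpleGraph.Walk.support_cons]
            rw [SimpleGraph.Walk.support_reverse, List.mem_reverse] at hy1
            have : y ∈ (SimpleGraph.Walk.cons hadj p).support := by
              rw [SimpleGraph.Walk.support_cons]
              exact List.mem_cons_of_mem _ hy1
            exact absurd (hmax y this) (by omega)
          · exact hy
        have hby : b = y := hbu.trans hyu.symm
        subst hby
        apply hedge
        have : s(u, b) ∈ p.reverse.edges := by
          rw [hrev]
          simp [SimpleGraph.Walk.edges_cons]
        rwa [SimpleGraph.Walk.edges_reverse, List.mem_reverse] at this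
  intro v c hc
  have hsne : c.support.toFinset.Nonempty := by
    refine ⟨v, ?_⟩
    rw [List.mem_toFinset]
    exact c.start_mem_support
  obtain ⟨u, hu, hmaxu⟩ := Finset.exists_max_image c.support.toFinset rk hsne
  rw [List.mem_toFinset] at hu
  apply key u (c.rotate u hu) (hc.rotate hu)
  intro w hw
  have h902 := SimpleGraph.Walk.support_rotate c u hu
  have hw2 : w ∈ u :: (c.rotate u hu).support.tail := by
    rw [← SimpleGraph.Walk.support_eq_cons]
    exact hw
  rcases List.mem_cons.mp hw2 with rfl | hw'
  · exact le_rfl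
  · have h1 : w ∈ c.support.tail := h902.mem_iff.mp hw'
    have h2 : w ∈ c.support := List.mem_of_mem_tail h1
    exact hmaxu w (List.mem_toFinset.mpr h2)

variable {Rel : Type} {ar : Rel → ℕ} {Pr : Type} {pa : Pr → ℕ}

/-- The parent-tree graph on positions of `χ`. -/
def posG (χ : SLR Rel ar Pr pa) : SimpleGraph (Pos χ) :=
  SimpleGraph.fromRel (fun a b => ∃ c, b.val = a.val ++ [c])

lemma posG_adj_par {χ : SLR Rel ar Pr pa} (n : Pos χ) (h : n.val ≠ []) :
    (posG χ).Adj n n.par := by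
  rcases List.eq_nil_or_concat n.val with hnil | ⟨l, b, hcat⟩
  · exact absurd hnil h
  · rw [List.concat_eq_append] at hcat
    rw [posG, SimpleGraph.fromRel_adj]
    constructor
    · intro he
      have := congrArg (fun m : Pos χ => m.val.length) he
      simp only [Pos.par] at this
      rw [hcat] at this
      simp at this
    · refine Or.inr ⟨b, ?_⟩
      rw [Pos.par_concat hcat]
      exact hcat

lemma posG_parent_structure {χ : SLR Rel ar Pr pa} (a b : Pos χ)
    (h : (posG χ).Adj a b) :
    (a = b.par ∧ a.val.length < b.val.length) ∨
    (b = a.par ∧ b.val.length < a.val.length) := by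
  rw [posG, SimpleGraph.fromRel_adj] at h
  obtain ⟨hne, h | h⟩ := h
  · obtain ⟨c, hc⟩ := h
    left
    constructor
    · apply Subtype.ext
      rw [Pos.par_concat hc]
    · rw [hc]
      simp
  · obtain ⟨c, hc⟩ := h
    right
    constructor
    · apply Subtype.ext
      rw [Pos.par_concat hc]
    · rw [hc]
      simp

/-- The root position. -/
def posRoot (χ : SLR Rel ar Pr pa) : Pos χ := ⟨[], by simp⟩

lemma posG_reach_root {χ : SLR Rel ar Pr pa} (n : Pos χ) :
    (posG χ).Reachable n (posRoot χ) := by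
  have main : ∀ (len : ℕ) (n : Pos χ), n.val.length ≤ len →
      (posG χ).Reachable n (posRoot χ) := by
    intro len
    induction len with
    | zero =>
        intro n hlen
        have hnr : n = posRoot χ :=
          Subtype.ext (List.eq_nil_of_length_eq_zero (Nat.le_zero.mp hlen) :
            n.val = (posRoot χ).val)
        rw [hnr]
    | succ len ih =>
        intro n hlen
        by_cases hnil : n.val = []
        · have hnr : n = posRoot χ := Subtype.ext (hnil : n.val = (posRoot χ).val)
          rw [hnr]
        · refine ((posG_adj_par n hnil).reachable).trans (ih n.par ?_)
          rcases List.eq_nil_or_concat n.val with hnil' | ⟨l, b, hcat⟩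
          · exact absurd hnil' hnil
          · rw [List.concat_eq_append] at hcat
            have : n.par.val.length + 1 = n.val.length := by
              rw [Pos.par_concat hcat, hcat]
              simp
            omega
  exact main n.val.length n le_rfl

lemma posG_connected (χ : SLR Rel ar Pr pa) : (posG χ).Connected := by
  rw [SimpleGraph.connected_iff_exists_forall_reachable]
  exact ⟨posRoot χ, fun w => (posG_reach_root w).symm⟩

lemma posG_isTree (χ : SLR Rel ar Pr pa) : (posG χ).IsTree := by
  refine ⟨posG_connected χ, ?_⟩
  exact isAcyclic_of_parent _ Pos.par (fun n => n.val.length) posG_parent_structure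

lemma pconn_induce_connected {χ : SLR Rel ar Pr pa} {S : Set (Pos χ)}
    (h : PConn Pos.par S) : ((posG χ).induce S).Connected := by
  obtain ⟨r, hr, hc⟩ := h
  have claim : ∀ (k : ℕ) (n : Pos χ) (hn : n ∈ S),
      (∀ j ≤ k, Pos.par^[j] n ∈ S) → Pos.par^[k] n = r →
      ((posG χ).induce S).Reachable ⟨n, hn⟩ ⟨r, hr⟩ := by
    intro k
    induction k with
    | zero =>
        intro n hn _ he
        rw [Function.iterate_zero_apply] at he
        have : (⟨n, hn⟩ : S) = ⟨r, hr⟩ := Subtype.ext he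
        rw [this]
    | succ k ih =>
        intro n hn hchain he
        by_cases hnil : n.val = []
        · have hfix : n.par = n := Subtype.ext (by simp [Pos.par, hnil])
          have : Pos.par^[k + 1] n = n := Function.iterate_fixed hfix (k + 1)
          rw [this] at he
          have hnr : (⟨n, hn⟩ : S) = ⟨r, hr⟩ := Subtype.ext he
          rw [hnr]
        · have h1 : Pos.par n ∈ S := by
            have := hchain 1 (by omega)
            rwa [Function.iterate_one] at this
          have hadj : ((posG χ).induce S).Adj ⟨n, hn⟩ ⟨Pos.par n, h1⟩ := by
            simp only [SimpleGraph.comap_adj, Function.Embedding.coe_subtype]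
            exact posG_adj_par n hnil
          refine hadj.reachable.trans (ih (Pos.par n) h1 ?_ ?_)
          · intro j hj
            have := hchain (j + 1) (by omega)
            rwa [Function.iterate_succ_apply] at this
          · rw [← Function.iterate_succ_apply]
            exact he
  rw [SimpleGraph.connected_iff_exists_forall_reachable]
  refine ⟨⟨r, hr⟩, fun b => ?_⟩
  obtain ⟨kb, eb, mb⟩ := hc b.val b.2
  exact (claim kb b.val b.2 mb eb).symm

/-- Positions of a formula form a finite type. -/
noncomputable def posFintype (χ : SLR Rel ar Pr pa) : Fintype (Pos χ) := by
  have hfin : {l : List Bool | (subAt χ l).isSome}.Finite := by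
    apply (List.finite_length_le Bool (dep χ)).subset
    intro l hl
    simp only [Set.mem_setOf_eq] at hl ⊢
    obtain ⟨ψ, hψ⟩ := Option.isSome_iff_exists.mp hl
    exact length_le_dep hψ
  exact hfin.fintype

end Aux7

end SLRTW
namespace SLRTW

section Aux8

variable {Rel : Type} {ar : Rel → ℕ} {V : Type} {Pr : Type} {pa : Pr → ℕ}

open SLR

/-- Finset of free variables. -/
def fvF : SLR Rel ar Pr pa → Finset ℕ
  | .emp => ∅
  | .eq x y => {x, y}
  | .ne x y => {x, y}
  | .rel _ a => Finset.image a Finset.univ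
  | .pred _ a => Finset.image a Finset.univ
  | .star φ ψ => fvF φ ∪ fvF ψ
  | .ex x φ => fvF φ \ {x}

lemma coe_fvF (φ : SLR Rel ar Pr pa) : (fvF φ : Set ℕ) = φ.fv := by
  induction φ with
  | emp => simp [fvF, SLR.fv]
  | eq x y => simp [fvF, SLR.fv]
  | ne x y => simp [fvF, SLR.fv]
  | rel r a => simp [fvF, SLR.fv, Set.image_univ]
  | pred A a => simp [fvF, SLR.fv, Set.image_univ]
  | star φ ψ ih1 ih2 => simp [fvF, SLR.fv, ih1, ih2]
  | ex x φ ih => simp [fvF, SLR.fv, ih]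

lemma mem_fvF {φ : SLR Rel ar Pr pa} {x : ℕ} : x ∈ fvF φ ↔ x ∈ φ.fv := by
  rw [← coe_fvF]
  simp

end Aux8

end SLRTW

namespace SLRTW

/-- Lemma 3.4: every canonical `Δ`-model of a nullary predicate has
treewidth at most `maxvar(Δ) - 1`. -/
theorem canonical_treewidth_bound
    (Rel : Type) [Fintype Rel] (ar : Rel → ℕ) (har : ∀ r, 1 ≤ ar r)
    (V : Type) [Infinite V] (Pr : Type) (pa : Pr → ℕ)
    (Δ : SID Rel ar Pr pa) (A : Pr) (hA : pa A = 0) :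
    ∀ S ∈ Canonical (V := V) Δ (natom A), tw S ≤ Δ.maxvar - 1 := by
  classical
  rintro S ⟨d, χ, hunf, hpf, hwn, s, hcs, hsat, hd⟩
  -- basic facts about χ
  have hA0 : IsEmpty (Fin (pa A)) := by rw [hA]; infer_instance
  have hfvA : SLR.fv (natom A : SLR Rel ar Pr pa) = ∅ := by
    show Set.range _ = ∅
    exact Set.range_eq_empty _
  have hfv : χ.fv = ∅ :=
    Set.subset_empty_iff.mp (hfvA ▸ Unfolds.fv_subset hunf)
  have hbnd : BND Δ.maxvar χ := by
    refine Unfolds.bnd (rules_bnd Δ (fun A ρ _ => vars_finite ρ)) hunf ?_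
    intro l ψ hl
    cases l with
    | nil =>
        simp only [subAt_nil, Option.some.injEq] at hl
        subst hl
        rw [hfvA]
        simp
    | cons b t => cases b <;> simp [natom, subAt] at hl
  have hq : χ.matrix.QPF := matrix_qpf hpf
  have hnd : χ.binders.Nodup := hwn.1
  -- the canonical remodelled store
  set emb : ℕ ↪ V := Infinite.natEmbedding V with hemb
  set s' : ℕ → V := fun x => emb (rp χ.matrix x) with hs'def
  have hs'eq : ∀ x y, χ.matrix.eqOccurs x y → s' x = s' y := by
    intro x y h
    exact congrArg emb (rp_eq_of_EC (Relation.ReflTransGen.single (Or.inl h)))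
  have hinj : ∀ x y, s' x = s' y → s x = s y := by
    intro x y h
    exact sat_EC_eq hq hsat (EC_of_rp_eq (emb.injective h))
  obtain ⟨S', hsat', _⟩ := remodel hq hsat s' hs'eq hinj
  have key : ∀ x ∈ χ.matrix.fv, ∀ y ∈ χ.matrix.fv, s x = s y → EC χ.matrix x y := by
    intro x hx y hy hxy
    have := hcs x hx y hy hxy S' s' hsat'
    exact EC_of_rp_eq (emb.injective this)
  -- the tree decomposition
  letI instF : Fintype (Pos χ) := posFintype χ
  have hbag_cover : ∀ (r : Rel), ∀ t ∈ S.interp r,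
      ∃ n : Pos χ, ∀ i, t i ∈ (fvF n.sub).image s := by
    intro r t ht
    obtain ⟨a, hro, rfl⟩ := mem_interp_RO hq hsat ht
    obtain ⟨l, hl⟩ := RO.matrix_pos hro
    have hval : (subAt χ l).isSome := by rw [hl]; rfl
    refine ⟨⟨l, hval⟩, fun i => ?_⟩
    have hsub : (Pos.sub ⟨l, hval⟩) = .rel r a := Pos.sub_unique hl
    rw [hsub]
    exact Finset.mem_image.mpr ⟨a i, by simp [fvF], rfl⟩
  have hbag_conn : ∀ u ∈ S.supp,
      (SimpleGraph.induce {n : Pos χ | u ∈ (fvF n.sub).image s} (posG χ)).Connected := by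
    intro u hu
    set P : Set (Pos χ) := {n : Pos χ | u ∈ (fvF n.sub).image s} with hP
    have hmemP : ∀ n : Pos χ, n ∈ P ↔ ∃ x, x ∈ n.sub.fv ∧ s x = u := by
      intro n
      rw [hP, Set.mem_setOf_eq, Finset.mem_image]
      constructor
      · rintro ⟨x, hx, rfl⟩
        exact ⟨x, mem_fvF.mp hx, rfl⟩
      · rintro ⟨x, hx, rfl⟩
        exact ⟨x, mem_fvF.mpr hx, rfl⟩
    -- the pivot variable
    obtain ⟨r, t, htup, i, hti⟩ := hu
    obtain ⟨a, hro, rfl⟩ := mem_interp_RO hq hsat htup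
    set x0 : ℕ := a i with hx0
    have hsx0 : s x0 = u := hti
    have hx0m : x0 ∈ χ.matrix.fv := RO.fv_subset hro hq ⟨i, rfl⟩
    have hNx0 : (NVar χ x0).Nonempty := by
      obtain ⟨l, hl⟩ := RO.matrix_pos hro
      have hval : (subAt χ l).isSome := by rw [hl]; rfl
      refine ⟨⟨l, hval⟩, ?_⟩
      have hsub : (Pos.sub ⟨l, hval⟩) = .rel r a := Pos.sub_unique hl
      show x0 ∈ SLR.fv (Pos.sub (⟨l, hval⟩ : Pos χ))
      rw [hsub]
      exact ⟨i, rfl⟩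
    have hNsubP : ∀ x, x ∈ χ.matrix.fv → s x = u → NVar χ x ⊆ P := by
      intro x _ hsx n hn
      exact (hmemP n).mpr ⟨x, hn, hsx⟩
    -- connected superset for each EC-chain
    have chainT : ∀ x, EC χ.matrix x0 x →
        ∃ T : Set (Pos χ), PConn Pos.par T ∧ NVar χ x0 ∪ NVar χ x ⊆ T ∧ T ⊆ P := by
      intro x hx
      induction hx with
      | refl =>
          exact ⟨NVar χ x0, pconn_NVar hfv hnd hNx0, by simp,
            hNsubP x0 hx0m hsx0⟩
      | @tail b c hxb hstep ih =>
          obtain ⟨T, hT1, hT2, hT3⟩ := ih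
          -- the common eq-atom position for b and c
          have hocc : χ.matrix.eqOccurs b c ∨ χ.matrix.eqOccurs c b := hstep
          have hocc' : ∃ (l : List Bool) (p q : ℕ), subAt χ l = some (.eq p q) ∧
              ((p = b ∧ q = c) ∨ (p = c ∧ q = b)) := by
            rcases hocc with h | h
            · obtain ⟨l, p, q, h1, h2⟩ := eqOccurs_matrix_pos h
              exact ⟨l, p, q, h1, h2⟩
            · obtain ⟨l, p, q, h1, h2⟩ := eqOccurs_matrix_pos h
              exact ⟨l, p, q, h1, by tauto⟩
          obtain ⟨l, p, q, hleq, hpq⟩ := hocc'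
          have hval : (subAt χ l).isSome := by rw [hleq]; rfl
          set n1 : Pos χ := ⟨l, hval⟩ with hn1
          have hsub1 : n1.sub = .eq p q := Pos.sub_unique hleq
          have hbm : n1 ∈ NVar χ b := by
            rw [NVar, Set.mem_setOf_eq, hsub1]
            rcases hpq with ⟨rfl, rfl⟩ | ⟨rfl, rfl⟩
            · exact Set.mem_insert _ _
            · exact Set.mem_insert_of_mem _ rfl
          have hcm : n1 ∈ NVar χ c := by
            rw [NVar, Set.mem_setOf_eq, hsub1]
            rcases hpq with ⟨rfl, rfl⟩ | ⟨rfl, rfl⟩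
            · exact Set.mem_insert_of_mem _ rfl
            · exact Set.mem_insert _ _
          have hpb : PConn Pos.par (NVar χ b) := pconn_NVar hfv hnd ⟨n1, hbm⟩
          have hpc : PConn Pos.par (NVar χ c) := pconn_NVar hfv hnd ⟨n1, hcm⟩
          have hbc : PConn Pos.par (NVar χ b ∪ NVar χ c) :=
            pconn_union hpb hpc ⟨n1, hbm, hcm⟩
          have hbinT : NVar χ b ⊆ T := fun n hn => hT2 (Or.inr hn)
          refine ⟨T ∪ (NVar χ b ∪ NVar χ c),
            pconn_union hT1 hbc ⟨n1, hbinT hbm, Or.inl hbm⟩, ?_, ?_⟩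
          · exact Set.union_subset (fun n hn => Or.inl (hT2 (Or.inl hn)))
              (fun n hn => Or.inr (Or.inr hn))
          · rintro n (hn | hn)
            · exact hT3 hn
            · have hbfv : b ∈ χ.matrix.fv := pos_fv_subset_matrix n1.sub_eq hbm
              have hcfv : c ∈ χ.matrix.fv := pos_fv_subset_matrix n1.sub_eq hcm
              have hsb : s b = u := (sat_EC_eq hq hsat hxb).symm.trans hsx0
              have hsc : s c = u :=
                (sat_EC_eq hq hsat (hxb.tail hstep)).symm.trans hsx0
              rcases hn with hn | hn
              · exact hNsubP b hbfv hsb hn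
              · exact hNsubP c hcfv hsc hn
    -- assemble over the whole class of `u`
    have hCfin : {x | x ∈ χ.matrix.fv ∧ s x = u}.Finite :=
      (fv_finite χ.matrix).subset (fun x hx => hx.1)
    have main : ∀ F : Finset ℕ, (↑F : Set ℕ) ⊆ {x | x ∈ χ.matrix.fv ∧ s x = u} →
        ∃ T : Set (Pos χ), PConn Pos.par T ∧ NVar χ x0 ⊆ T ∧
          (∀ x ∈ F, NVar χ x ⊆ T) ∧ T ⊆ P := by
      intro F
      induction F using Finset.induction_on with
      | empty =>
          intro _
          exact ⟨NVar χ x0, pconn_NVar hfv hnd hNx0, subset_rfl,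
            fun x hx => absurd hx (Finset.notMem_empty x), hNsubP x0 hx0m hsx0⟩
      | @insert y F hyF ih =>
          intro hsub
          have hyC : y ∈ χ.matrix.fv ∧ s y = u := hsub (Finset.mem_insert_self y F)
          obtain ⟨T, hT1, hT2, hT3, hT4⟩ :=
            ih (fun x hx => hsub (Finset.mem_insert_of_mem hx))
          have hECy : EC χ.matrix x0 y := key x0 hx0m y hyC.1 (hsx0.trans hyC.2.symm)
          obtain ⟨Ty, hTy1, hTy2, hTy3⟩ := chainT y hECy
          obtain ⟨nx, hnx⟩ := hNx0
          refine ⟨T ∪ Ty, pconn_union hT1 hTy1 ⟨nx, hT2 hnx, hTy2 (Or.inl hnx)⟩,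
            fun n hn => Or.inl (hT2 hn), ?_, ?_⟩
          · intro x hx
            rcases Finset.mem_insert.mp hx with rfl | hx
            · exact fun n hn => Or.inr (hTy2 (Or.inr hn))
            · exact fun n hn => Or.inl (hT3 x hx hn)
          · rintro n (hn | hn)
            · exact hT4 hn
            · exact hTy3 hn
    obtain ⟨T, hT1, _, hT3, hT4⟩ := main hCfin.toFinset (by
      intro x hx
      rwa [Set.Finite.coe_toFinset] at hx)
    have hPT : P ⊆ T := by
      intro n hn
      obtain ⟨x, hx, hsx⟩ := (hmemP n).mp hn
      have hxm : x ∈ χ.matrix.fv := pos_fv_subset_matrix n.sub_eq hx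
      exact hT3 x (hCfin.mem_toFinset.mpr ⟨hxm, hsx⟩) hx
    exact pconn_induce_connected (pconn_subset_eq hT1 hPT hT4)
  -- assemble the tree decomposition
  set T : TreeDecomp S :=
    { ι := Pos χ
      instFin := instF
      G := posG χ
      isTree := posG_isTree χ
      bag := fun n => (fvF n.sub).image s
      bag_cover := hbag_cover
      bag_conn := hbag_conn } with hTdef
  have h1 : tw S ≤ T.width := Nat.sInf_le ⟨T, rfl⟩
  refine h1.trans ?_
  rw [TreeDecomp.width]
  apply Nat.sub_le_sub_right
  apply Finset.sup_le
  intro n _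
  calc ((fvF n.sub).image s).card
      ≤ (fvF n.sub).card := Finset.card_image_le
    _ = n.sub.fv.ncard := by rw [← coe_fvF]; exact (Set.ncard_coe_finset _).symm
    _ ≤ Δ.maxvar := hbnd n.val n.sub n.sub_eq

end SLRTW
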